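/- arXiv:0708.0981 — 12 statements merged into one kernel-verified Lean document; each statement's English description precedes it below -/
import Mathlib

section
/- Let A ≥ 0 be a real number and U(x) = 1 if x ≤ A, U(x) = 0 if x > A. Suppose g : ℕ → ℝ satisfies ∑_{x=0}^∞ g(x) e^{-θ}θ^x/x! = θ·∑_{x=0}^{⌊A⌋} e^{-θ}θ^x/x! for every θ > 0, with the left-hand series absolutely convergent for every θ > 0. Then g(x) = x·1{x ≤ ⌊A⌋ + 1} for every x ∈ ℕ; that is, Robbins' V estimator is the unique unbiased estimator of U(X)·θ in the Poisson case. -/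
set_option maxHeartbeats 800000


/-- Poisson probability mass function with mean `θ`. -/
noncomputable def poissonPmf (θ : ℝ) (x : ℕ) : ℝ :=
  Real.exp (-θ) * θ ^ x / (Nat.factorial x : ℝ)

/-- A power series (with factorial weights) vanishing on `(0,1]` has zero coefficients. -/
lemma poisson_coeff_zero (c : ℕ → ℝ)
    (hs : ∀ θ : ℝ, 0 < θ → θ ≤ 1 →
      Summable fun x : ℕ => |c x| * θ ^ x / (Nat.factorial x : ℝ))
    (h0 : ∀ θ : ℝ, 0 < θ → θ ≤ 1 →
      (∑' x : ℕ, c x * θ ^ x / (Nat.factorial x : ℝ)) = 0) :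
    ∀ n, c n = 0 := by
  intro n
  induction n using Nat.strong_induction_on with
  | _ n ih =>
    have hS1 : Summable fun x : ℕ => |c x| / (Nat.factorial x : ℝ) := by
      have h := hs 1 one_pos le_rfl
      apply h.congr; intro x; simp
    set S : ℝ := ∑' x : ℕ, |c x| / (Nat.factorial x : ℝ) with hSdef
    have hSnn : 0 ≤ S := tsum_nonneg (fun x => by positivity)
    have key : ∀ θ : ℝ, 0 < θ → θ ≤ 1 → |c n| ≤ θ * (S * (Nat.factorial n : ℝ)) := by
      intro θ hθ hθ1
      have hfac : (0:ℝ) < (Nat.factorial n : ℝ) := by positivity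
      have habs' : Summable fun x : ℕ => |c x * θ ^ x / (Nat.factorial x : ℝ)| := by
        apply (hs θ hθ hθ1).congr
        intro x
        rw [abs_div, abs_mul, abs_pow, abs_of_pos hθ, Nat.abs_cast]
      have hsum : Summable fun x : ℕ => c x * θ ^ x / (Nat.factorial x : ℝ) :=
        habs'.of_abs
      have hsplit := Summable.sum_add_tsum_nat_add (f := fun x : ℕ =>
        c x * θ ^ x / (Nat.factorial x : ℝ)) (n + 1) hsum
      rw [h0 θ hθ hθ1] at hsplit
      have hfin : (∑ i ∈ Finset.range (n + 1),
          c i * θ ^ i / (Nat.factorial i : ℝ)) = c n * θ ^ n / (Nat.factorial n : ℝ) := by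
        rw [Finset.sum_range_succ]
        have : (∑ i ∈ Finset.range n, c i * θ ^ i / (Nat.factorial i : ℝ)) = 0 := by
          apply Finset.sum_eq_zero
          intro i hi
          rw [ih i (Finset.mem_range.mp hi)]; ring
        rw [this, zero_add]
      rw [hfin] at hsplit
      have heq : c n * θ ^ n / (Nat.factorial n : ℝ) =
          -∑' i : ℕ, c (i + (n + 1)) * θ ^ (i + (n + 1)) / (Nat.factorial (i + (n + 1)) : ℝ) :=
        eq_neg_of_add_eq_zero_left hsplit
      -- bound the tail
      have htail_abs : Summable fun i : ℕ =>
          |c (i + (n + 1))| * θ ^ (i + (n + 1)) / (Nat.factorial (i + (n + 1)) : ℝ) :=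
        (summable_nat_add_iff (f := fun x : ℕ => |c x| * θ ^ x / (Nat.factorial x : ℝ)) (n + 1)).mpr (hs θ hθ hθ1)
      have hsum_tail : Summable fun i : ℕ =>
          c (i + (n + 1)) * θ ^ (i + (n + 1)) / (Nat.factorial (i + (n + 1)) : ℝ) :=
        (summable_nat_add_iff (f := fun x : ℕ => c x * θ ^ x / (Nat.factorial x : ℝ)) (n + 1)).mpr hsum
      have hS1tail : Summable fun i : ℕ =>
          |c (i + (n + 1))| / (Nat.factorial (i + (n + 1)) : ℝ) :=
        (summable_nat_add_iff (f := fun x : ℕ => |c x| / (Nat.factorial x : ℝ)) (n + 1)).mpr hS1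
      have hbound : |∑' i : ℕ, c (i + (n + 1)) * θ ^ (i + (n + 1)) /
          (Nat.factorial (i + (n + 1)) : ℝ)| ≤ θ ^ (n + 1) * S := by
        calc |∑' i : ℕ, c (i + (n + 1)) * θ ^ (i + (n + 1)) / (Nat.factorial (i + (n + 1)) : ℝ)|
            ≤ ∑' i : ℕ, |c (i + (n + 1)) * θ ^ (i + (n + 1)) / (Nat.factorial (i + (n + 1)) : ℝ)| := by
              have h' : Summable fun i : ℕ =>
                  |c (i + (n + 1)) * θ ^ (i + (n + 1)) / (Nat.factorial (i + (n + 1)) : ℝ)| :=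
                htail_abs.congr (fun i => by
                  rw [abs_div, abs_mul, abs_pow, abs_of_pos hθ, Nat.abs_cast])
              have h'' : Summable fun i : ℕ =>
                  ‖c (i + (n + 1)) * θ ^ (i + (n + 1)) / (Nat.factorial (i + (n + 1)) : ℝ)‖ := by
                simpa only [Real.norm_eq_abs] using h'
              simpa only [Real.norm_eq_abs] using norm_tsum_le_tsum_norm h''
          _ = ∑' i : ℕ, |c (i + (n + 1))| * θ ^ (i + (n + 1)) / (Nat.factorial (i + (n + 1)) : ℝ) := by
              apply tsum_congr; intro i
              rw [abs_div, abs_mul, abs_pow, abs_of_pos hθ, Nat.abs_cast]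
          _ ≤ ∑' i : ℕ, θ ^ (n + 1) * (|c (i + (n + 1))| / (Nat.factorial (i + (n + 1)) : ℝ)) := by
              apply Summable.tsum_le_tsum _ htail_abs (hS1tail.mul_left _)
              intro i
              have hp : θ ^ (i + (n + 1)) ≤ θ ^ (n + 1) := by
                apply pow_le_pow_of_le_one hθ.le hθ1
                omega
              have hfn : (0:ℝ) < (Nat.factorial (i + (n + 1)) : ℝ) := by positivity
              rw [div_le_iff₀ hfn]
              have : |c (i + (n + 1))| * θ ^ (i + (n + 1)) ≤ |c (i + (n + 1))| * θ ^ (n + 1) :=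
                mul_le_mul_of_nonneg_left hp (abs_nonneg _)
              calc |c (i + (n + 1))| * θ ^ (i + (n + 1)) ≤ |c (i + (n + 1))| * θ ^ (n + 1) := this
                _ = θ ^ (n + 1) * (|c (i + (n + 1))| / (Nat.factorial (i + (n + 1)) : ℝ)) *
                    (Nat.factorial (i + (n + 1)) : ℝ) := by field_simp
          _ = θ ^ (n + 1) * ∑' i : ℕ, |c (i + (n + 1))| / (Nat.factorial (i + (n + 1)) : ℝ) := by
              rw [tsum_mul_left]
          _ ≤ θ ^ (n + 1) * S := by
              apply mul_le_mul_of_nonneg_left _ (by positivity)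
              have hsplitS := Summable.sum_add_tsum_nat_add (f := fun x : ℕ =>
                |c x| / (Nat.factorial x : ℝ)) (n + 1) hS1
              have hpos : 0 ≤ ∑ i ∈ Finset.range (n + 1), |c i| / (Nat.factorial i : ℝ) :=
                Finset.sum_nonneg (fun i _ => by positivity)
              linarith [hsplitS]
      have h1 : |c n| * θ ^ n / (Nat.factorial n : ℝ) ≤ θ ^ (n + 1) * S := by
        calc |c n| * θ ^ n / (Nat.factorial n : ℝ)
            = |c n * θ ^ n / (Nat.factorial n : ℝ)| := by
              rw [abs_div, abs_mul, abs_pow, abs_of_pos hθ, Nat.abs_cast]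
          _ = |-∑' i : ℕ, c (i + (n + 1)) * θ ^ (i + (n + 1)) / (Nat.factorial (i + (n + 1)) : ℝ)| := by
              rw [heq]
          _ = |∑' i : ℕ, c (i + (n + 1)) * θ ^ (i + (n + 1)) / (Nat.factorial (i + (n + 1)) : ℝ)| :=
              abs_neg _
          _ ≤ θ ^ (n + 1) * S := hbound
      have hθn : (0:ℝ) < θ ^ n := by positivity
      rw [div_le_iff₀ hfac] at h1
      have h2 : |c n| * θ ^ n ≤ θ ^ n * (θ * (S * (Nat.factorial n : ℝ))) := by
        calc |c n| * θ ^ n ≤ θ ^ (n + 1) * S * (Nat.factorial n : ℝ) := h1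
          _ = θ ^ n * (θ * (S * (Nat.factorial n : ℝ))) := by ring
      nlinarith [h2, hθn]
    have : |c n| ≤ 0 := by
      apply le_of_forall_pos_le_add
      intro ε hε
      rw [zero_add]
      set K := S * (Nat.factorial n : ℝ) with hK
      have hKnn : 0 ≤ K := by positivity
      set θ := min 1 (ε / (K + 1)) with hθdef
      have hθpos : 0 < θ := lt_min one_pos (by positivity)
      have hθ1 : θ ≤ 1 := min_le_left _ _
      have := key θ hθpos hθ1
      calc |c n| ≤ θ * K := this
        _ ≤ (ε / (K + 1)) * K := by
            apply mul_le_mul_of_nonneg_right (min_le_right _ _) hKnn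
        _ ≤ ε := by
            rw [div_mul_eq_mul_div, div_le_iff₀ (by positivity)]
            nlinarith
    have := abs_nonneg (c n)
    have : |c n| = 0 := le_antisymm ‹|c n| ≤ 0› this
    exact abs_eq_zero.mp this

/-- Uniqueness of the unbiased estimator in the Poisson case: if
`∑_x g(x) e^{-θ}θ^x/x! = θ·∑_{x=0}^{⌊A⌋} e^{-θ}θ^x/x!` for every `θ > 0`
(with the left-hand series absolutely convergent), then
`g(x) = x·1{x ≤ ⌊A⌋ + 1}` for every `x ∈ ℕ`. -/
theorem poisson_V_unique (A : ℝ) (hA : 0 ≤ A) (g : ℕ → ℝ)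
    (habs : ∀ θ : ℝ, 0 < θ → Summable fun x : ℕ => |g x| * poissonPmf θ x)
    (hunb : ∀ θ : ℝ, 0 < θ →
      (∑' x : ℕ, g x * poissonPmf θ x) =
        θ * ∑ x ∈ Finset.range (Nat.floor A + 1), poissonPmf θ x) :
    ∀ x : ℕ, g x = if x ≤ Nat.floor A + 1 then (x : ℝ) else 0 := by
  set N := Nat.floor A with hN
  set v : ℕ → ℝ := fun x => if x ≤ N + 1 then (x : ℝ) else 0 with hv
  set c : ℕ → ℝ := fun x => g x - v x with hc
  -- summability of |g x| θ^x/x!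
  have hgs : ∀ θ : ℝ, 0 < θ → Summable fun x : ℕ => |g x| * θ ^ x / (Nat.factorial x : ℝ) := by
    intro θ hθ
    have h := (habs θ hθ).mul_left (Real.exp θ)
    apply h.congr
    intro x
    unfold poissonPmf
    rw [Real.exp_neg]
    have := Real.exp_pos θ
    field_simp
  -- summability of v
  have hvs : ∀ θ : ℝ, 0 < θ → Summable fun x : ℕ => v x * θ ^ x / (Nat.factorial x : ℝ) := by
    intro θ hθ
    apply summable_of_ne_finset_zero (s := Finset.range (N + 2))
    intro x hx
    simp only [Finset.mem_range] at hx
    have : ¬ x ≤ N + 1 := by omega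
    simp [hv, this]
  have hgs' : ∀ θ : ℝ, 0 < θ → Summable fun x : ℕ => g x * θ ^ x / (Nat.factorial x : ℝ) := by
    intro θ hθ
    apply Summable.of_abs
    apply (hgs θ hθ).congr
    intro x
    rw [abs_div, abs_mul, abs_pow, abs_of_pos hθ, Nat.abs_cast]
  -- the sums agree
  have hsums : ∀ θ : ℝ, 0 < θ →
      (∑' x : ℕ, g x * θ ^ x / (Nat.factorial x : ℝ)) =
        ∑' x : ℕ, v x * θ ^ x / (Nat.factorial x : ℝ) := by
    intro θ hθ
    have hexp := Real.exp_pos θ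
    have hg1 : (∑' x : ℕ, g x * θ ^ x / (Nat.factorial x : ℝ)) =
        θ * ∑ x ∈ Finset.range (N + 1), θ ^ x / (Nat.factorial x : ℝ) := by
      have e1 : (∑' x : ℕ, g x * θ ^ x / (Nat.factorial x : ℝ)) =
          Real.exp θ * ∑' x : ℕ, g x * poissonPmf θ x := by
        rw [← tsum_mul_left]
        apply tsum_congr
        intro x
        unfold poissonPmf
        rw [Real.exp_neg]
        field_simp
      rw [e1, hunb θ hθ, Finset.mul_sum, Finset.mul_sum, Finset.mul_sum]
      apply Finset.sum_congr rfl
      intro x _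
      unfold poissonPmf
      rw [Real.exp_neg]
      field_simp
    have hv1 : (∑' x : ℕ, v x * θ ^ x / (Nat.factorial x : ℝ)) =
        θ * ∑ x ∈ Finset.range (N + 1), θ ^ x / (Nat.factorial x : ℝ) := by
      rw [tsum_eq_sum (s := Finset.range (N + 2)) ?h]
      · rw [Finset.sum_range_succ' (fun x => v x * θ ^ x / (Nat.factorial x : ℝ)) (N + 1)]
        have h0 : v 0 * θ ^ 0 / (Nat.factorial 0 : ℝ) = 0 := by simp [hv]
        rw [h0, add_zero, Finset.mul_sum]
        apply Finset.sum_congr rfl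
        intro k hk
        have hk' : k + 1 ≤ N + 1 := by
          simp only [Finset.mem_range] at hk; omega
        simp only [hv, if_pos hk']
        rw [Nat.factorial_succ]
        push_cast
        have : (Nat.factorial k : ℝ) > 0 := by positivity
        field_simp
        ring
      · intro x hx
        simp only [Finset.mem_range] at hx
        have : ¬ x ≤ N + 1 := by omega
        simp [hv, this]
    rw [hg1, hv1]
  -- apply the coefficient lemma
  have hczero : ∀ n, c n = 0 := by
    apply poisson_coeff_zero
    · intro θ hθ _
      have hmaj : Summable fun x : ℕ => |g x| * θ ^ x / (Nat.factorial x : ℝ) +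
          |v x| * θ ^ x / (Nat.factorial x : ℝ) := by
        apply Summable.add (hgs θ hθ)
        apply summable_of_ne_finset_zero (s := Finset.range (N + 2))
        intro x hx
        simp only [Finset.mem_range] at hx
        have : ¬ x ≤ N + 1 := by omega
        simp [hv, this]
      apply Summable.of_nonneg_of_le (fun x => by positivity) _ hmaj
      intro x
      have h1 : |c x| ≤ |g x| + |v x| := abs_sub _ _
      have h2 : (0:ℝ) < θ ^ x / (Nat.factorial x : ℝ) := by positivity
      calc |c x| * θ ^ x / (Nat.factorial x : ℝ)
          = |c x| * (θ ^ x / (Nat.factorial x : ℝ)) := by ring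
        _ ≤ (|g x| + |v x|) * (θ ^ x / (Nat.factorial x : ℝ)) :=
            mul_le_mul_of_nonneg_right h1 h2.le
        _ = |g x| * θ ^ x / (Nat.factorial x : ℝ) + |v x| * θ ^ x / (Nat.factorial x : ℝ) := by
            ring
    · intro θ hθ _
      have : (∑' x : ℕ, c x * θ ^ x / (Nat.factorial x : ℝ)) =
          (∑' x : ℕ, g x * θ ^ x / (Nat.factorial x : ℝ)) -
            ∑' x : ℕ, v x * θ ^ x / (Nat.factorial x : ℝ) := by
        rw [← Summable.tsum_sub (hgs' θ hθ) (hvs θ hθ)]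
        apply tsum_congr
        intro x
        simp only [hc]
        ring
      rw [this, hsums θ hθ, sub_self]
  intro x
  have := hczero x
  simp only [hc, hv] at this
  linarith [this]
end

section
/- Let A ≥ 0 be a real number, let U(x) = 1 if x ≤ A and U(x) = 0 if x > A, and let X be a geometric random variable with mass function (1−θ)θ^x, x = 0,1,2,..., where 0 < θ < 1. Then the estimator V(X) = ∑_{i=0}^{X−1} U(i) = min(X, ⌊A⌋ + 1) satisfies E_θ[V(X)] = (θ/(1−θ))·E_θ[U(X)] for every 0 < θ < 1; that is, V(X) is an unbiased estimator of U(X) times the mean θ/(1−θ) of X. -/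
/-- Geometric probability mass function `f(x|θ) = (1-θ)θ^x`, `x = 0,1,2,…`. -/
noncomputable def geometricPmf (θ : ℝ) (x : ℕ) : ℝ := (1 - θ) * θ ^ x

lemma min_eq_sum_ite (x m : ℕ) :
    (∑ i ∈ Finset.range m, if i < x then (1 : ℕ) else 0) = min x m := by
  induction m with
  | zero => simp
  | succ m ih =>
    rw [Finset.sum_range_succ, ih]
    by_cases h : m < x
    · simp [h]; omega
    · simp [h]; omega

lemma tail_sum (θ : ℝ) (hθ0 : 0 < θ) (hθ1 : θ < 1) (k : ℕ) :
    (∑' x : ℕ, (if k ≤ x then (1 - θ) * θ ^ x else 0)) = θ ^ k := by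
  have hgeo : Summable (fun x : ℕ => (1 - θ) * θ ^ x) :=
    (summable_geometric_of_lt_one hθ0.le hθ1).mul_left _
  have hsum : Summable (fun x : ℕ => (if k ≤ x then (1 - θ) * θ ^ x else 0)) := by
    have hnn : ∀ x : ℕ, 0 ≤ (1 - θ) * θ ^ x :=
      fun x => mul_nonneg (by linarith) (pow_nonneg hθ0.le x)
    apply Summable.of_nonneg_of_le _ _ hgeo
    · intro x
      split
      exacts [hnn _, le_rfl]
    · intro x
      split
      exacts [le_rfl, hnn _]
  have := Summable.sum_add_tsum_nat_add k hsum
  have h1 : (∑ i ∈ Finset.range k, (if k ≤ i then (1 - θ) * θ ^ i else 0)) = 0 := by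
    apply Finset.sum_eq_zero
    intro i hi
    simp only [Finset.mem_range] at hi
    simp [Nat.not_le.mpr hi, show ¬ k ≤ i by omega]
  have h2 : (∑' x : ℕ, (if k ≤ x + k then (1 - θ) * θ ^ (x + k) else 0))
      = ∑' x : ℕ, (1 - θ) * θ ^ k * θ ^ x := by
    apply tsum_congr
    intro x
    rw [if_pos (Nat.le_add_left k x)]
    ring
  rw [h1, zero_add, h2] at this
  rw [← this, tsum_mul_left, tsum_geometric_of_lt_one hθ0.le hθ1]
  have hne : (1 : ℝ) - θ ≠ 0 := by linarith
  field_simp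

/-- For the `U` function `U(x) = 1{x ≤ A}` and `X` geometric with parameter
`0 < θ < 1`, Robbins' estimator `V(X) = ∑_{i=0}^{X-1} U(i) = min(X, ⌊A⌋ + 1)`
satisfies `E_θ[V(X)] = (θ/(1-θ))·E_θ[U(X)]`. -/
theorem geometric_V_unbiased (A : ℝ) (hA : 0 ≤ A) (θ : ℝ) (hθ0 : 0 < θ) (hθ1 : θ < 1) :
    (∑' x : ℕ, ((min x (Nat.floor A + 1) : ℕ) : ℝ) * geometricPmf θ x) =
      (θ / (1 - θ)) * ∑' x : ℕ, (if (x : ℝ) ≤ A then (1 : ℝ) else 0) * geometricPmf θ x := by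
  set m := Nat.floor A + 1 with hm
  have h1θ : (0:ℝ) < 1 - θ := by linarith
  -- LHS
  have lhs_eq : (∑' x : ℕ, ((min x m : ℕ) : ℝ) * geometricPmf θ x)
      = ∑ i ∈ Finset.range m, θ ^ (i + 1) := by
    have step : ∀ x : ℕ, ((min x m : ℕ) : ℝ) * geometricPmf θ x
        = ∑ i ∈ Finset.range m, (if i + 1 ≤ x then (1 - θ) * θ ^ x else 0) := by
      intro x
      rw [← min_eq_sum_ite x m]
      push_cast
      rw [Finset.sum_mul]
      apply Finset.sum_congr rfl
      intro i _
      by_cases h : i < x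
      · rw [if_pos h, if_pos (by omega), geometricPmf]; ring
      · rw [if_neg h, if_neg (by omega), zero_mul]
    rw [tsum_congr step]
    rw [Summable.tsum_finsetSum]
    · apply Finset.sum_congr rfl
      intro i _
      exact tail_sum θ hθ0 hθ1 (i + 1)
    · intro i _
      have hgeo : Summable (fun x : ℕ => (1 - θ) * θ ^ x) :=
        (summable_geometric_of_lt_one hθ0.le hθ1).mul_left _
      have hnn : ∀ x : ℕ, 0 ≤ (1 - θ) * θ ^ x :=
        fun x => mul_nonneg (by linarith) (pow_nonneg hθ0.le x)
      apply Summable.of_nonneg_of_le _ _ hgeo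
      · intro x; split
        exacts [hnn _, le_rfl]
      · intro x; split
        exacts [le_rfl, hnn _]
  -- RHS
  have hiff : ∀ x : ℕ, ((x : ℝ) ≤ A ↔ x < m) := by
    intro x
    rw [hm, Nat.lt_succ_iff, Nat.le_floor_iff hA]
  have rhs_eq : (∑' x : ℕ, (if (x : ℝ) ≤ A then (1 : ℝ) else 0) * geometricPmf θ x)
      = ∑ i ∈ Finset.range m, (1 - θ) * θ ^ i := by
    have step : ∀ x : ℕ, (if (x : ℝ) ≤ A then (1 : ℝ) else 0) * geometricPmf θ x
        = if x ∈ Finset.range m then (1 - θ) * θ ^ x else 0 := by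
      intro x
      by_cases h : (x : ℝ) ≤ A
      · rw [if_pos h, if_pos (Finset.mem_range.mpr ((hiff x).mp h)), geometricPmf, one_mul]
      · rw [if_neg h, if_neg (fun hx => h ((hiff x).mpr (Finset.mem_range.mp hx))), zero_mul]
    rw [tsum_congr step, tsum_eq_sum (s := Finset.range m) (by intro b hb; rw [if_neg hb])]
    apply Finset.sum_congr rfl
    intro i hi
    rw [if_pos hi]
  rw [lhs_eq, rhs_eq, Finset.mul_sum]
  apply Finset.sum_congr rfl
  intro i _
  have hne : (1 : ℝ) - θ ≠ 0 := ne_of_gt h1θ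
  field_simp
  ring
end

section
/- Let A ≥ 0 be a real number, let U(x) = 1 if x ≤ A and U(x) = 0 if x > A, and let X be uniformly distributed on (0, θ), θ > 0. Then the estimator V(X) = X·U(X) + ∫_0^X U(t) dt, which equals 2X for X ≤ A and A for X > A, satisfies E_θ[V(X)] = θ·P_θ(X ≤ A) = min(A, θ) for every θ > 0; that is, V(X) is an unbiased estimator of U(X)·θ. -/
open MeasureTheory intervalIntegral

/-- For the `U` function `U(x) = 1{x ≤ A}` and `X` uniform on `(0, θ)`, `θ > 0`,
Robbins' estimator `V(X) = X·U(X) + ∫_0^X U(t) dt` (which equals `2X` for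
`X ≤ A` and `A` for `X > A`) satisfies `E_θ[V(X)] = θ·P_θ(X ≤ A) = min(A, θ)`. -/
theorem uniform_V_unbiased (A : ℝ) (hA : 0 ≤ A) (θ : ℝ) (hθ : 0 < θ) :
    (∫ x in Set.Ioo (0 : ℝ) θ, (if x ≤ A then 2 * x else A) * θ⁻¹) =
        θ * ∫ x in Set.Ioo (0 : ℝ) θ, (if x ≤ A then (1 : ℝ) else 0) * θ⁻¹ ∧
      θ * (∫ x in Set.Ioo (0 : ℝ) θ, (if x ≤ A then (1 : ℝ) else 0) * θ⁻¹) = min A θ := by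
  have hconv : ∀ f : ℝ → ℝ, (∫ x in Set.Ioo (0 : ℝ) θ, f x) = ∫ x in (0:ℝ)..θ, f x := by
    intro f
    rw [intervalIntegral.integral_of_le hθ.le, MeasureTheory.integral_Ioc_eq_integral_Ioo]
  rw [hconv, hconv]
  rcases le_or_gt θ A with hle | hlt
  · have h1 : (∫ x in (0:ℝ)..θ, (if x ≤ A then 2 * x else A) * θ⁻¹)
        = ∫ x in (0:ℝ)..θ, 2 * x * θ⁻¹ := by
      apply intervalIntegral.integral_congr
      intro x hx
      rw [Set.uIcc_of_le hθ.le] at hx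
      simp only [if_pos (hx.2.trans hle)]
    have h2 : (∫ x in (0:ℝ)..θ, (if x ≤ A then (1:ℝ) else 0) * θ⁻¹)
        = ∫ x in (0:ℝ)..θ, (1:ℝ) * θ⁻¹ := by
      apply intervalIntegral.integral_congr
      intro x hx
      rw [Set.uIcc_of_le hθ.le] at hx
      simp only [if_pos (hx.2.trans hle)]
    rw [h1, h2]
    have e1 : (∫ x in (0:ℝ)..θ, 2 * x * θ⁻¹) = θ := by
      have : (∫ x in (0:ℝ)..θ, 2 * x * θ⁻¹)
          = (2 * θ⁻¹) * ∫ x in (0:ℝ)..θ, x := by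
        rw [← intervalIntegral.integral_const_mul]
        congr 1; ext x; ring
      rw [this, integral_id]
      field_simp
      ring
    have e2 : (∫ x in (0:ℝ)..θ, (1:ℝ) * θ⁻¹) = 1 := by
      rw [intervalIntegral.integral_const, smul_eq_mul]
      rw [sub_zero, one_mul, mul_inv_cancel₀ hθ.ne']
    rw [e1, e2]
    exact ⟨by ring, by rw [min_eq_right hle]; ring⟩
  · -- A < θ, split at A
    have hAθ : A ≤ θ := hlt.le
    have key : ∀ (g h : ℝ → ℝ), Continuous g → Continuous h →
        (∀ x ∈ Set.Icc (0:ℝ) A, (if x ≤ A then g x else h x) = g x) →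
        (∫ x in (0:ℝ)..θ, (if x ≤ A then g x else h x))
          = (∫ x in (0:ℝ)..A, g x) + ∫ x in Set.Ioc A θ, h x := by
      intro g h hg hh _
      have hi1 : IntervalIntegrable (fun x => if x ≤ A then g x else h x) volume 0 A := by
        rw [intervalIntegrable_iff_integrableOn_Ioc_of_le hA]
        apply (hg.integrableOn_Ioc (a := 0) (b := A)).congr_fun
        · intro x hx; simp [hx.2]
        · exact measurableSet_Ioc
      have hi2 : IntervalIntegrable (fun x => if x ≤ A then g x else h x) volume A θ := by
        rw [intervalIntegrable_iff_integrableOn_Ioc_of_le hAθ]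
        apply (hh.integrableOn_Ioc (a := A) (b := θ)).congr_fun
        · intro x hx; simp [not_le.mpr hx.1]
        · exact measurableSet_Ioc
      rw [← intervalIntegral.integral_add_adjacent_intervals hi1 hi2]
      congr 1
      · apply intervalIntegral.integral_congr
        intro x hx
        rw [Set.uIcc_of_le hA] at hx
        simp [hx.2]
      · rw [intervalIntegral.integral_of_le hAθ]
        apply MeasureTheory.setIntegral_congr_fun measurableSet_Ioc
        intro x hx
        simp [not_le.mpr hx.1]
    have e1 := key (fun x => 2 * x * θ⁻¹) (fun _ => A * θ⁻¹)
      (by continuity) (by continuity) (fun x hx => by simp [hx.2])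
    have e2 := key (fun _ => (1:ℝ) * θ⁻¹) (fun _ => (0:ℝ) * θ⁻¹)
      (by continuity) (by continuity) (fun x hx => by simp [hx.2])
    have c1 : (∫ x in (0:ℝ)..A, 2 * x * θ⁻¹) = A ^ 2 * θ⁻¹ := by
      have : (∫ x in (0:ℝ)..A, 2 * x * θ⁻¹)
          = (2 * θ⁻¹) * ∫ x in (0:ℝ)..A, x := by
        rw [← intervalIntegral.integral_const_mul]
        congr 1; ext x; ring
      rw [this, integral_id]; ring
    have c2 : (∫ _x in Set.Ioc A θ, A * θ⁻¹) = (θ - A) * (A * θ⁻¹) := by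
      rw [MeasureTheory.setIntegral_const]
      rw [measureReal_def, Real.volume_Ioc, ENNReal.toReal_ofReal (by linarith), smul_eq_mul]
    have c3 : (∫ x in (0:ℝ)..A, (1:ℝ) * θ⁻¹) = A * θ⁻¹ := by
      simp
    have c4 : (∫ _x in Set.Ioc A θ, (0:ℝ) * θ⁻¹) = 0 := by simp
    simp only [ite_mul]
    have eq1 : (∫ x in (0:ℝ)..θ, if x ≤ A then 2 * x * θ⁻¹ else A * θ⁻¹) = A := by
      rw [e1, c1, c2]; field_simp; ring
    have eq2 : (∫ x in (0:ℝ)..θ, if x ≤ A then 1 * θ⁻¹ else 0 * θ⁻¹) = A * θ⁻¹ := by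
      rw [e2, c3, c4]; ring
    rw [eq1, eq2, min_eq_left hAθ]
    constructor <;> field_simp
end

section
/- Let A ≥ 0 be a real number, U(x) = 1 if x ≤ A and U(x) = 0 if x > A, and let X be Poisson with mean θ > 0. Let V(x) = x·1{x ≤ ⌊A⌋ + 1} and define V*(x) = V(x) for x ≠ ⌊A⌋ + 1 and V*(⌊A⌋ + 1) = 0. Let W : ℝ → [0, ∞) be measurable with W(0) = 0 and W(t) > 0 for t > 0. Then for every θ > 0, E_θ[W(V*(X) − U(X)θ)] ≤ E_θ[W(V(X) − U(X)θ)], and if E_θ[W(V(X) − U(X)θ)] < ∞ the inequality is strict; hence V(X) is an inadmissible estimator of U(X)θ under the loss W(a − S). -/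
/-- Risk of the estimator `δ` of `U(X)·θ` under the loss `W(a - S)`,
where `U(x) = 1{x ≤ A}` and `X` is Poisson with mean `θ`. -/
noncomputable def poissonRisk (A θ : ℝ) (W : ℝ → ℝ) (δ : ℕ → ℝ) : ENNReal :=
  ∑' x : ℕ,
    ENNReal.ofReal (W (δ x - (if (x : ℝ) ≤ A then (1 : ℝ) else 0) * θ) * poissonPmf θ x)

/-- Robbins' estimator `V(x) = x·1{x ≤ ⌊A⌋+1}` of `U(X)θ` (with `U(x) = 1{x ≤ A}`)
is inadmissible: the estimator `V*` that agrees with `V` except that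
`V*(⌊A⌋+1) = 0` has risk no larger for every `θ > 0`, and strictly smaller
whenever the risk of `V` is finite. -/
theorem poisson_V_inadmissible (A : ℝ) (hA : 0 ≤ A)
    (W : ℝ → ℝ) (hWmeas : Measurable W) (hWnonneg : ∀ t, 0 ≤ W t)
    (hW0 : W 0 = 0) (hWpos : ∀ t : ℝ, 0 < t → 0 < W t)
    (V Vstar : ℕ → ℝ)
    (hV : ∀ x, V x = if x ≤ Nat.floor A + 1 then (x : ℝ) else 0)
    (hVstar : ∀ x, Vstar x = if x = Nat.floor A + 1 then 0 else V x)
    (θ : ℝ) (hθ : 0 < θ) :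
    poissonRisk A θ W Vstar ≤ poissonRisk A θ W V ∧
      (poissonRisk A θ W V < ⊤ → poissonRisk A θ W Vstar < poissonRisk A θ W V) := by
  classical
  set n0 := Nat.floor A + 1 with hn0
  have hAlt : ¬ ((n0 : ℝ) ≤ A) := by
    push_neg
    push_cast
    rw [hn0]; push_cast; exact Nat.lt_floor_add_one A
  have hVstar0 : Vstar n0 = 0 := by rw [hVstar]; simp
  have hVn0 : V n0 = (n0 : ℝ) := by rw [hV]; simp
  have hle : ∀ x : ℕ,
      ENNReal.ofReal (W (Vstar x - (if (x:ℝ) ≤ A then (1:ℝ) else 0) * θ) * poissonPmf θ x)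
      ≤ ENNReal.ofReal (W (V x - (if (x:ℝ) ≤ A then (1:ℝ) else 0) * θ) * poissonPmf θ x) := by
    intro x
    rcases eq_or_ne x n0 with h | h
    · subst h
      rw [hVstar0, if_neg hAlt]
      simp [hW0]
    · rw [hVstar, if_neg h]
  have hmain : poissonRisk A θ W Vstar ≤ poissonRisk A θ W V :=
    ENNReal.tsum_le_tsum hle
  refine ⟨hmain, fun hfin => ?_⟩
  have hpmf : 0 < poissonPmf θ n0 := by
    unfold poissonPmf
    positivity
  have hWn0 : 0 < W ((n0 : ℝ)) := by
    apply hWpos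
    positivity
  have hstrict :
      ENNReal.ofReal (W (Vstar n0 - (if (n0:ℝ) ≤ A then (1:ℝ) else 0) * θ) * poissonPmf θ n0)
      < ENNReal.ofReal (W (V n0 - (if (n0:ℝ) ≤ A then (1:ℝ) else 0) * θ) * poissonPmf θ n0) := by
    rw [hVstar0, hVn0, if_neg hAlt]
    have h1 : W ((0:ℝ) - 0 * θ) = 0 := by simpa using hW0
    rw [h1]
    simp only [zero_mul, sub_zero, ENNReal.ofReal_zero]
    exact ENNReal.ofReal_pos.mpr (mul_pos hWn0 hpmf)
  exact ENNReal.tsum_lt_tsum (ne_of_lt (lt_of_le_of_lt hmain hfin)) hle hstrict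
end

section
/- Let A ≥ 0 be a real number, U(x) = 1 if x ≤ A and U(x) = 0 if x > A, and let X_1, …, X_n be independent Poisson random variables with means θ_1, …, θ_n > 0. Let S(X, θ) = ∑_{j=1}^n U(X_j)θ_j, V(X) = ∑_{j=1}^n X_j·1{X_j ≤ ⌊A⌋ + 1}, and define V*(X) = 0 if X_j ≥ ⌊A⌋ + 1 for all j, and V*(X) = V(X) otherwise. Let W : ℝ → [0, ∞) be measurable with W(0) = 0 and W(t) > 0 for t > 0. Then for every θ ∈ (0, ∞)^n, E_θ[W(V*(X) − S)] ≤ E_θ[W(V(X) − S)], and the inequality is strict whenever E_θ[W(V(X) − S)] < ∞; hence V(X) is an inadmissible estimator of S under the loss W(a − S). -/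
/-- The estimand `S(x, θ) = ∑_j U(x_j)θ_j` with `U(x) = 1{x ≤ A}`. -/
noncomputable def poissonS (n : ℕ) (A : ℝ) (θ : Fin n → ℝ) (x : Fin n → ℕ) : ℝ :=
  ∑ j, (if ((x j : ℝ)) ≤ A then θ j else 0)

/-- Risk of the estimator `δ` of `S` under the loss `W(a - S)` when
`X_1, …, X_n` are independent Poisson with means `θ_1, …, θ_n`. -/
noncomputable def poissonRiskN (n : ℕ) (A : ℝ) (θ : Fin n → ℝ) (W : ℝ → ℝ)
    (δ : (Fin n → ℕ) → ℝ) : ENNReal :=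
  ∑' x : Fin n → ℕ,
    ENNReal.ofReal (W (δ x - poissonS n A θ x) * ∏ j, poissonPmf (θ j) (x j))

/-- Theorem 2.1 (Poisson case): for `X_1, …, X_n` independent Poisson, the
unbiased estimator `V(X) = ∑_j X_j·1{X_j ≤ ⌊A⌋+1}` of `S = ∑_j U(X_j)θ_j`
is inadmissible under any loss `W(a - S)` with `W(0) = 0`, `W(t) > 0` for
`t > 0`: the estimator `V*` vanishing on `{∀ j, X_j ≥ ⌊A⌋+1}` and agreeing
with `V` elsewhere is at least as good for every `θ`, and strictly better
whenever the risk of `V` is finite. -/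
theorem poisson_V_inadmissible_n (n : ℕ) (hn : 0 < n) (A : ℝ) (hA : 0 ≤ A)
    (W : ℝ → ℝ) (hWmeas : Measurable W) (hWnonneg : ∀ t, 0 ≤ W t)
    (hW0 : W 0 = 0) (hWpos : ∀ t : ℝ, 0 < t → 0 < W t)
    (V Vstar : (Fin n → ℕ) → ℝ)
    (hV : ∀ x, V x = ∑ j, (if x j ≤ Nat.floor A + 1 then ((x j : ℝ)) else 0))
    (hVstar : ∀ x, Vstar x = if ∀ j, Nat.floor A + 1 ≤ x j then 0 else V x)
    (θ : Fin n → ℝ) (hθ : ∀ j, 0 < θ j) :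
    poissonRiskN n A θ W Vstar ≤ poissonRiskN n A θ W V ∧
      (poissonRiskN n A θ W V < ⊤ →
        poissonRiskN n A θ W Vstar < poissonRiskN n A θ W V) := by
  have hlt : ∀ m : ℕ, Nat.floor A + 1 ≤ m → A < (m : ℝ) := by
    intro m hm
    calc A < (Nat.floor A : ℝ) + 1 := Nat.lt_floor_add_one A
    _ = ((Nat.floor A + 1 : ℕ) : ℝ) := by push_cast; ring
    _ ≤ (m : ℝ) := by exact_mod_cast hm
  have hS0 : ∀ x : Fin n → ℕ, (∀ j, Nat.floor A + 1 ≤ x j) → poissonS n A θ x = 0 := by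
    intro x hx
    unfold poissonS
    exact Finset.sum_eq_zero fun j _ => if_neg (not_le.mpr (hlt _ (hx j)))
  set f := fun x : Fin n → ℕ =>
    ENNReal.ofReal (W (Vstar x - poissonS n A θ x) * ∏ j, poissonPmf (θ j) (x j)) with hf
  set g := fun x : Fin n → ℕ =>
    ENNReal.ofReal (W (V x - poissonS n A θ x) * ∏ j, poissonPmf (θ j) (x j)) with hg
  have hfg : ∀ x, f x ≤ g x := by
    intro x
    by_cases h : ∀ j, Nat.floor A + 1 ≤ x j
    · simp only [hf, hVstar x, if_pos h, hS0 x h, sub_zero, hW0, zero_mul,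
        ENNReal.ofReal_zero]
      exact zero_le
    · simp only [hf, hg, hVstar x, if_neg h]; exact le_rfl
  have hle : poissonRiskN n A θ W Vstar ≤ poissonRiskN n A θ W V :=
    ENNReal.tsum_le_tsum hfg
  refine ⟨hle, fun hfin => ?_⟩
  set x0 : Fin n → ℕ := fun _ => Nat.floor A + 1 with hx0def
  have hx0 : ∀ j, Nat.floor A + 1 ≤ x0 j := fun j => le_rfl
  have hS := hS0 x0 hx0
  have hflt : f x0 < g x0 := by
    have hVpos : 0 < V x0 := by
      rw [hV]
      refine Finset.sum_pos (fun j _ => ?_) (by haveI := Fin.pos_iff_nonempty.mp hn; exact Finset.univ_nonempty)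
      rw [if_pos le_rfl]
      exact_mod_cast Nat.succ_pos (Nat.floor A)
    have hprod : 0 < ∏ j, poissonPmf (θ j) (x0 j) := by
      refine Finset.prod_pos fun j _ => ?_
      unfold poissonPmf
      have := hθ j
      have := Real.exp_pos (-(θ j))
      positivity
    have hf0 : f x0 = 0 := by
      simp only [hf, hVstar x0, if_pos hx0, hS, sub_zero, hW0, zero_mul, ENNReal.ofReal_zero]
    rw [hf0]
    have : 0 < W (V x0 - poissonS n A θ x0) := by
      rw [hS, sub_zero]; exact hWpos _ hVpos
    exact ENNReal.ofReal_pos.mpr (mul_pos this hprod)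
  have hfin' : (∑' x, f x) ≠ ⊤ := ne_top_of_le_ne_top hfin.ne hle
  exact ENNReal.tsum_lt_tsum hfin' hfg hflt
end

section
/- Let A ≥ 0 be a real number, U(x) = 1 if x ≤ A and U(x) = 0 if x > A, and let X be geometric with mass function (1−θ)θ^x, 0 < θ < 1. Let V(x) = min(x, ⌊A⌋ + 1) and define V*(x) = V(x) for x ≤ ⌊A⌋ and V*(x) = 0 for x ≥ ⌊A⌋ + 1. Let W : ℝ → [0, ∞) be measurable with W(0) = 0 and W(t) > 0 for t > 0. Then for every 0 < θ < 1, E_θ[W(V*(X) − U(X)·θ/(1−θ))] ≤ E_θ[W(V(X) − U(X)·θ/(1−θ))], and the inequality is strict whenever the right-hand risk is finite; hence V(X) is inadmissible under the loss W(a − S). -/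
/-- Risk of the estimator `δ` of `U(X)·θ/(1-θ)` under the loss `W(a - S)`,
where `U(x) = 1{x ≤ A}` and `X` is geometric with parameter `θ`. -/
noncomputable def geometricRisk (A θ : ℝ) (W : ℝ → ℝ) (δ : ℕ → ℝ) : ENNReal :=
  ∑' x : ℕ,
    ENNReal.ofReal
      (W (δ x - (if (x : ℝ) ≤ A then (1 : ℝ) else 0) * (θ / (1 - θ))) * geometricPmf θ x)

/-- Theorem 2.1 (geometric case, `n = 1`): Robbins' estimator
`V(x) = min(x, ⌊A⌋+1)` of `U(X)·θ/(1-θ)` is inadmissible: the estimator `V*`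
with `V*(x) = V(x)` for `x ≤ ⌊A⌋` and `V*(x) = 0` for `x ≥ ⌊A⌋+1` has risk no
larger for every `0 < θ < 1`, and strictly smaller whenever the risk of `V`
is finite. -/
theorem geometric_V_inadmissible (A : ℝ) (hA : 0 ≤ A)
    (W : ℝ → ℝ) (hWmeas : Measurable W) (hWnonneg : ∀ t, 0 ≤ W t)
    (hW0 : W 0 = 0) (hWpos : ∀ t : ℝ, 0 < t → 0 < W t)
    (V Vstar : ℕ → ℝ)
    (hV : ∀ x, V x = ((min x (Nat.floor A + 1) : ℕ) : ℝ))
    (hVstar : ∀ x, Vstar x = if x ≤ Nat.floor A then V x else 0)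
    (θ : ℝ) (hθ0 : 0 < θ) (hθ1 : θ < 1) :
    geometricRisk A θ W Vstar ≤ geometricRisk A θ W V ∧
      (geometricRisk A θ W V < ⊤ →
        geometricRisk A θ W Vstar < geometricRisk A θ W V) := by
  classical
  set m := Nat.floor A with hm
  set f : ℕ → ENNReal := fun x =>
    ENNReal.ofReal
      (W (Vstar x - (if (x : ℝ) ≤ A then (1 : ℝ) else 0) * (θ / (1 - θ))) * geometricPmf θ x)
    with hf
  set g : ℕ → ENNReal := fun x =>
    ENNReal.ofReal
      (W (V x - (if (x : ℝ) ≤ A then (1 : ℝ) else 0) * (θ / (1 - θ))) * geometricPmf θ x)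
    with hg
  have hind : ∀ x : ℕ, m < x → ¬ ((x : ℝ) ≤ A) := by
    intro x hx
    push_neg
    calc A < (m : ℝ) + 1 := by exact_mod_cast Nat.lt_floor_add_one A
    _ ≤ (x : ℝ) := by exact_mod_cast hx
  have hfzero : ∀ x : ℕ, m < x → f x = 0 := by
    intro x hx
    have h1 : ¬ (x ≤ m) := Nat.not_le.mpr hx
    simp [hf, hVstar x, h1, hind x hx, hW0]
  have hle : ∀ x, f x ≤ g x := by
    intro x
    by_cases hx : x ≤ m
    · simp [hf, hg, hVstar x, hx]
    · rw [hfzero x (Nat.not_le.mp hx)]; exact zero_le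
  have hgpos : 0 < g (m + 1) := by
    have hnind := hind (m + 1) (Nat.lt_succ_self m)
    have hVval : V (m + 1) = ((m : ℝ) + 1) := by
      rw [hV]; simp
    have hWpos' : 0 < W ((m : ℝ) + 1) := hWpos _ (by positivity)
    have hpmf : 0 < geometricPmf θ (m + 1) := by
      exact mul_pos (by linarith) (pow_pos hθ0 _)
    have : 0 < W (V (m + 1) - (if ((m + 1 : ℕ) : ℝ) ≤ A then (1 : ℝ) else 0) * (θ / (1 - θ)))
        * geometricPmf θ (m + 1) := by
      rw [hVval]
      simp only [Nat.cast_add, Nat.cast_one] at hnind ⊢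
      rw [if_neg hnind]
      simpa using mul_pos hWpos' hpmf
    exact ENNReal.ofReal_pos.mpr this
  refine ⟨ENNReal.tsum_le_tsum hle, fun hfin => ?_⟩
  have hffin : (∑' x, f x) ≠ ⊤ :=
    ne_top_of_le_ne_top hfin.ne (ENNReal.tsum_le_tsum hle)
  show (∑' x, f x) < ∑' x, g x
  exact ENNReal.tsum_lt_tsum hffin hle
    (by rw [hfzero (m+1) (Nat.lt_succ_self m)]; exact hgpos)
end

section
/- Let A ≥ 0 be a real number, U(x) = 1 if x ≤ A and U(x) = 0 if x > A, and let X_1, …, X_n be independent geometric random variables with mass functions (1−θ_j)θ_j^x, 0 < θ_j < 1. Let S = ∑_{j=1}^n U(X_j)·θ_j/(1−θ_j), V(X) = ∑_{j=1}^n min(X_j, ⌊A⌋ + 1), and define V*(X) = 0 if X_j ≥ ⌊A⌋ + 1 for all j, and V*(X) = V(X) otherwise. Let W : ℝ → [0, ∞) be measurable with W(0) = 0 and W(t) > 0 for t > 0. Then for every θ ∈ (0,1)^n, E_θ[W(V*(X) − S)] ≤ E_θ[W(V(X) − S)], with strict inequality whenever the right-hand risk is finite; hence V(X) is an inadmissible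 estimator of S under the loss W(a − S). -/
/-- The estimand `S = ∑_j U(x_j)·θ_j/(1-θ_j)` with `U(x) = 1{x ≤ A}`. -/
noncomputable def geometricS (n : ℕ) (A : ℝ) (θ : Fin n → ℝ) (x : Fin n → ℕ) : ℝ :=
  ∑ j, (if ((x j : ℝ)) ≤ A then θ j / (1 - θ j) else 0)

/-- Risk of the estimator `δ` of `S` under the loss `W(a - S)` when
`X_1, …, X_n` are independent geometric with parameters `θ_1, …, θ_n`. -/
noncomputable def geometricRiskN (n : ℕ) (A : ℝ) (θ : Fin n → ℝ) (W : ℝ → ℝ)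
    (δ : (Fin n → ℕ) → ℝ) : ENNReal :=
  ∑' x : Fin n → ℕ,
    ENNReal.ofReal (W (δ x - geometricS n A θ x) * ∏ j, geometricPmf (θ j) (x j))

/-- Theorem 2.1 (geometric case): the unbiased estimator
`V(X) = ∑_j min(X_j, ⌊A⌋+1)` of `S = ∑_j U(X_j)·θ_j/(1-θ_j)` is inadmissible:
the estimator `V*` vanishing on `{∀ j, X_j ≥ ⌊A⌋+1}` and agreeing with `V`
elsewhere is at least as good for every `θ ∈ (0,1)^n`, and strictly better
whenever the risk of `V` is finite. -/
theorem geometric_V_inadmissible_n (n : ℕ) (hn : 0 < n) (A : ℝ) (hA : 0 ≤ A)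
    (W : ℝ → ℝ) (hWmeas : Measurable W) (hWnonneg : ∀ t, 0 ≤ W t)
    (hW0 : W 0 = 0) (hWpos : ∀ t : ℝ, 0 < t → 0 < W t)
    (V Vstar : (Fin n → ℕ) → ℝ)
    (hV : ∀ x, V x = ∑ j, ((min (x j) (Nat.floor A + 1) : ℕ) : ℝ))
    (hVstar : ∀ x, Vstar x = if ∀ j, Nat.floor A + 1 ≤ x j then 0 else V x)
    (θ : Fin n → ℝ) (hθ0 : ∀ j, 0 < θ j) (hθ1 : ∀ j, θ j < 1) :
    geometricRiskN n A θ W Vstar ≤ geometricRiskN n A θ W V ∧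
      (geometricRiskN n A θ W V < ⊤ →
        geometricRiskN n A θ W Vstar < geometricRiskN n A θ W V) := by
  classical
  set f : (Fin n → ℕ) → ENNReal := fun x =>
    ENNReal.ofReal (W (Vstar x - geometricS n A θ x) * ∏ j, geometricPmf (θ j) (x j)) with hf
  set g : (Fin n → ℕ) → ENNReal := fun x =>
    ENNReal.ofReal (W (V x - geometricS n A θ x) * ∏ j, geometricPmf (θ j) (x j)) with hg
  -- S vanishes when all coordinates are ≥ ⌊A⌋+1
  have hS0 : ∀ x : Fin n → ℕ, (∀ j, Nat.floor A + 1 ≤ x j) → geometricS n A θ x = 0 := by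
    intro x hx
    unfold geometricS
    apply Finset.sum_eq_zero
    intro j _
    have h1 : A < ((Nat.floor A + 1 : ℕ) : ℝ) := by
      push_cast
      exact Nat.lt_floor_add_one A
    have h2 : ((Nat.floor A + 1 : ℕ) : ℝ) ≤ (x j : ℝ) := by exact_mod_cast hx j
    rw [if_neg (by linarith)]
  have hle : ∀ x, f x ≤ g x := by
    intro x
    by_cases hx : ∀ j, Nat.floor A + 1 ≤ x j
    · have : Vstar x = 0 := by rw [hVstar x, if_pos hx]
      simp only [hf, this, hS0 x hx, sub_zero, hW0, zero_mul, ENNReal.ofReal_zero]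
      exact zero_le
    · have : Vstar x = V x := by rw [hVstar x, if_neg hx]
      simp [hf, hg, this]
  have hprodpos : ∀ x : Fin n → ℕ, 0 < ∏ j, geometricPmf (θ j) (x j) := by
    intro x
    apply Finset.prod_pos
    intro j _
    unfold geometricPmf
    exact mul_pos (by linarith [hθ1 j]) (pow_pos (hθ0 j) _)
  -- strict inequality at x₀ = fun _ => ⌊A⌋+1
  set x₀ : Fin n → ℕ := fun _ => Nat.floor A + 1 with hx₀
  have hx₀all : ∀ j, Nat.floor A + 1 ≤ x₀ j := fun j => le_refl _
  have hfx₀ : f x₀ = 0 := by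
    have : Vstar x₀ = 0 := by rw [hVstar x₀, if_pos hx₀all]
    simp [hf, this, hS0 x₀ hx₀all, hW0]
  have hVx₀pos : 0 < V x₀ := by
    rw [hV x₀]
    have : ∀ j : Fin n, ((min (x₀ j) (Nat.floor A + 1) : ℕ) : ℝ) = ((Nat.floor A + 1 : ℕ) : ℝ) := by
      intro j; simp [hx₀]
    rw [Finset.sum_congr rfl (fun j _ => this j)]
    rw [Finset.sum_const]
    simp only [Finset.card_univ, Fintype.card_fin, nsmul_eq_mul]
    positivity
  have hgx₀ : 0 < g x₀ := by
    simp only [hg]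
    rw [hS0 x₀ hx₀all, sub_zero]
    apply ENNReal.ofReal_pos.2
    exact mul_pos (hWpos _ hVx₀pos) (hprodpos x₀)
  have hlt : f x₀ < g x₀ := hfx₀ ▸ hgx₀
  have hmain : geometricRiskN n A θ W Vstar ≤ geometricRiskN n A θ W V :=
    ENNReal.tsum_le_tsum hle
  refine ⟨hmain, fun hfin => ?_⟩
  have hfne : (∑' x, f x) ≠ ⊤ := by
    exact ne_top_of_le_ne_top hfin.ne hmain
  exact ENNReal.tsum_lt_tsum hfne hle hlt
end

section
/- Let A > 0 be a real number, U(x) = 1 if x ≤ A and U(x) = 0 if x > A, and let X be exponential with density (1/θ)e^{-x/θ}, θ > 0. Let V(x) = min(x, A) and define V*(x) = x for x ≤ A and V*(x) = 0 for x > A. Let W : ℝ → [0, ∞) be measurable with W(0) = 0 and W(t) > 0 for t > 0. Then for every θ > 0, E_θ[W(V*(X) − U(X)θ)] ≤ E_θ[W(V(X) − U(X)θ)], with strict inequality whenever E_θ[W(V(X) − U(X)θ)] < ∞; hence V(X) is an inadmissible estimator of U(X)θ under the loss W(a − S). -/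
open MeasureTheory

/-- Risk of the estimator `δ` of `U(X)θ` under the loss `W(a - S)`, where
`U(x) = 1{x ≤ A}` and `X` is exponential with density `(1/θ)e^{-x/θ}` on `x > 0`. -/
noncomputable def expRisk (A θ : ℝ) (W : ℝ → ℝ) (δ : ℝ → ℝ) : ENNReal :=
  ∫⁻ x in Set.Ioi (0 : ℝ),
    ENNReal.ofReal
      (W (δ x - (if x ≤ A then (1 : ℝ) else 0) * θ) * (θ⁻¹ * Real.exp (-x / θ)))

/-- Theorem 2.1 (exponential case, `n = 1`): Robbins' estimator
`V(x) = min(x, A)` of `U(X)θ` is inadmissible: the estimator `V*` with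
`V*(x) = x` for `x ≤ A` and `V*(x) = 0` for `x > A` has risk no larger for
every `θ > 0`, and strictly smaller whenever the risk of `V` is finite. -/
theorem exponential_V_inadmissible (A : ℝ) (hA : 0 < A)
    (W : ℝ → ℝ) (hWmeas : Measurable W) (hWnonneg : ∀ t, 0 ≤ W t)
    (hW0 : W 0 = 0) (hWpos : ∀ t : ℝ, 0 < t → 0 < W t)
    (V Vstar : ℝ → ℝ)
    (hV : ∀ x, V x = min x A)
    (hVstar : ∀ x, Vstar x = if x ≤ A then x else 0)
    (θ : ℝ) (hθ : 0 < θ) :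
    expRisk A θ W Vstar ≤ expRisk A θ W V ∧
      (expRisk A θ W V < ⊤ → expRisk A θ W Vstar < expRisk A θ W V) := by
  set fV := fun x : ℝ => ENNReal.ofReal
      (W (V x - (if x ≤ A then (1 : ℝ) else 0) * θ) * (θ⁻¹ * Real.exp (-x / θ))) with hfV
  set fS := fun x : ℝ => ENNReal.ofReal
      (W (Vstar x - (if x ≤ A then (1 : ℝ) else 0) * θ) * (θ⁻¹ * Real.exp (-x / θ))) with hfS
  have hsplit : Set.Ioi (0 : ℝ) = Set.Ioc 0 A ∪ Set.Ioi A :=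
    (Set.Ioc_union_Ioi_eq_Ioi hA.le).symm
  have hmeasIoc : MeasurableSet (Set.Ioc (0 : ℝ) A) := measurableSet_Ioc
  have hmeasIoi : MeasurableSet (Set.Ioi A) := measurableSet_Ioi
  have hdisj : Disjoint (Set.Ioc (0 : ℝ) A) (Set.Ioi A) := Set.Ioc_disjoint_Ioi le_rfl
  have hEq : ∀ x ∈ Set.Ioc (0 : ℝ) A, fS x = fV x := by
    intro x hx
    simp [hfS, hfV, hV, hVstar, hx.2, min_eq_left hx.2]
  have hS0 : ∀ x ∈ Set.Ioi A, fS x = 0 := by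
    intro x hx
    have hx' : ¬ x ≤ A := not_le.mpr hx
    simp [hfS, hVstar, hx', hW0]
  have hVA : ∀ x ∈ Set.Ioi A, fV x
      = ENNReal.ofReal (W A * (θ⁻¹ * Real.exp (-x / θ))) := by
    intro x hx
    have hx' : ¬ x ≤ A := not_le.mpr hx
    simp [hfV, hV, hx', min_eq_right (le_of_lt (Set.mem_Ioi.mp hx))]
  have hRV : expRisk A θ W V
      = (∫⁻ x in Set.Ioc (0:ℝ) A, fV x) + ∫⁻ x in Set.Ioi A, fV x := by
    rw [expRisk, hsplit, lintegral_union hmeasIoi hdisj]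
  have hZero : (∫⁻ x in Set.Ioi A, fS x) = 0 := by
    rw [setLIntegral_congr_fun hmeasIoi hS0]
    simp
  have hRS : expRisk A θ W Vstar = ∫⁻ x in Set.Ioc (0:ℝ) A, fV x := by
    rw [expRisk, hsplit, lintegral_union hmeasIoi hdisj,
      setLIntegral_congr_fun hmeasIoc hEq, hZero, add_zero]
  have hCpos : 0 < ∫⁻ x in Set.Ioi A, fV x := by
    rw [setLIntegral_congr_fun hmeasIoi hVA]
    have hmeas : Measurable fun x : ℝ =>
        ENNReal.ofReal (W A * (θ⁻¹ * Real.exp (-x / θ))) := by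
      apply Measurable.ennreal_ofReal
      exact (measurable_const.mul ((measurable_const.mul
        (((measurable_id.neg).div_const θ).exp))))
    rw [lintegral_pos_iff_support hmeas]
    have hsupp : Function.support (fun x : ℝ =>
        ENNReal.ofReal (W A * (θ⁻¹ * Real.exp (-x / θ)))) = Set.univ := by
      ext x
      simp only [Function.mem_support, Set.mem_univ, iff_true]
      have hpos : 0 < W A * (θ⁻¹ * Real.exp (-x / θ)) :=
        mul_pos (hWpos A hA) (mul_pos (inv_pos.mpr hθ) (Real.exp_pos _))
      simp [ENNReal.ofReal_pos.mpr hpos, ne_of_gt (ENNReal.ofReal_pos.mpr hpos)]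
    rw [hsupp]
    simp [Measure.restrict_apply_univ]
  constructor
  · rw [hRS, hRV]; exact le_self_add
  · intro hfin
    rw [hRV] at hfin
    have hSfin : (∫⁻ x in Set.Ioc (0:ℝ) A, fV x) ≠ ⊤ :=
      (lt_of_le_of_lt le_self_add hfin).ne
    rw [hRS, hRV]
    exact ENNReal.lt_add_right hSfin hCpos.ne'
end

section
/- Let A > 0 be a real number, U(x) = 1 if x ≤ A and U(x) = 0 if x > A, and let X_1, …, X_n be independent exponential random variables with densities (1/θ_j)e^{-x/θ_j}, θ_j > 0. Let S = ∑_{j=1}^n U(X_j)θ_j, V(X) = ∑_{j=1}^n min(X_j, A), and define V*(X) = 0 if X_j > A for all j, and V*(X) = V(X) otherwise. Let W : ℝ → [0, ∞) be measurable with W(0) = 0 and W(t) > 0 for t > 0. Then for every θ ∈ (0, ∞)^n, E_θ[W(V*(X) − S)] ≤ E_θ[W(V(X) − S)], with strict inequality whenever the right-hand risk is finite; hence V(X) is an inadmissible estimator of S under the loss W(a − S). -/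
open MeasureTheory

/-- The exponential distribution with scale `θ` (density `(1/θ)e^{-x/θ}` on `x > 0`),
as a measure on `ℝ`. -/
noncomputable def expMeas (θ : ℝ) : Measure ℝ :=
  volume.withDensity fun x =>
    ENNReal.ofReal (if 0 < x then θ⁻¹ * Real.exp (-x / θ) else 0)

/-- The estimand `S(x, θ) = ∑_j U(x_j)θ_j` with `U(x) = 1{x ≤ A}`. -/
noncomputable def expS (n : ℕ) (A : ℝ) (θ : Fin n → ℝ) (x : Fin n → ℝ) : ℝ :=
  ∑ j, (if x j ≤ A then θ j else 0)

/-- Risk of the estimator `δ` of `S` under the loss `W(a - S)` when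
`X_1, …, X_n` are independent exponential with scales `θ_1, …, θ_n`. -/
noncomputable def expRiskN (n : ℕ) (A : ℝ) (θ : Fin n → ℝ) (W : ℝ → ℝ)
    (δ : (Fin n → ℝ) → ℝ) : ENNReal :=
  ∫⁻ x : Fin n → ℝ, ENNReal.ofReal (W (δ x - expS n A θ x))
    ∂(Measure.pi fun j => expMeas (θ j))

instance expMeas.instSigmaFinite (θ : ℝ) : SigmaFinite (expMeas θ) :=
  SigmaFinite.withDensity_ofReal _

lemma expMeas_Ioi_ne_zero {θ A : ℝ} (hθ : 0 < θ) (hA : 0 < A) :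
    expMeas θ (Set.Ioi A) ≠ 0 := by
  have h1 : expMeas θ (Set.Ioi A)
      = ∫⁻ x in Set.Ioi A,
          ENNReal.ofReal (if 0 < x then θ⁻¹ * Real.exp (-x / θ) else 0) ∂volume :=
    withDensity_apply _ measurableSet_Ioi
  set c := ENNReal.ofReal (θ⁻¹ * Real.exp (-(A + 1) / θ)) with hc
  have hcpos : 0 < c :=
    ENNReal.ofReal_pos.mpr (mul_pos (inv_pos.mpr hθ) (Real.exp_pos _))
  have h2 : c * volume (Set.Ioo A (A + 1)) ≤ expMeas θ (Set.Ioi A) := by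
    rw [h1]
    calc c * volume (Set.Ioo A (A + 1))
        = ∫⁻ _x in Set.Ioo A (A + 1), c ∂volume := by
          rw [setLIntegral_const]
      _ ≤ ∫⁻ x in Set.Ioo A (A + 1),
            ENNReal.ofReal (if 0 < x then θ⁻¹ * Real.exp (-x / θ) else 0) ∂volume := by
          refine setLIntegral_mono' measurableSet_Ioo fun x hx => ?_
          rw [if_pos (hA.trans hx.1)]
          refine ENNReal.ofReal_le_ofReal ?_
          refine mul_le_mul_of_nonneg_left ?_ (inv_nonneg.mpr hθ.le)
          refine Real.exp_le_exp.mpr ?_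
          have hx2 : -(A + 1) ≤ -x := neg_le_neg hx.2.le
          exact div_le_div_of_nonneg_right hx2 hθ.le
      _ ≤ _ := lintegral_mono_set Set.Ioo_subset_Ioi_self
  have hvol : volume (Set.Ioo A (A + 1)) = 1 := by
    rw [Real.volume_Ioo]; norm_num
  rw [hvol, mul_one] at h2
  exact fun h0 => (hcpos.trans_le h2).ne' (by rw [h0])

/-- Theorem 2.1 (exponential case): the unbiased estimator
`V(X) = ∑_j min(X_j, A)` of `S = ∑_j U(X_j)θ_j` is inadmissible: the estimator
`V*` vanishing on `{∀ j, X_j > A}` and agreeing with `V` elsewhere is at least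
as good for every `θ ∈ (0,∞)^n`, and strictly better whenever the risk of `V`
is finite. -/
theorem exponential_V_inadmissible_n (n : ℕ) (hn : 0 < n) (A : ℝ) (hA : 0 < A)
    (W : ℝ → ℝ) (hWmeas : Measurable W) (hWnonneg : ∀ t, 0 ≤ W t)
    (hW0 : W 0 = 0) (hWpos : ∀ t : ℝ, 0 < t → 0 < W t)
    (V Vstar : (Fin n → ℝ) → ℝ)
    (hV : ∀ x, V x = ∑ j, min (x j) A)
    (hVstar : ∀ x, Vstar x = if ∀ j, A < x j then 0 else V x)
    (θ : Fin n → ℝ) (hθ : ∀ j, 0 < θ j) :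
    expRiskN n A θ W Vstar ≤ expRiskN n A θ W V ∧
      (expRiskN n A θ W V < ⊤ →
        expRiskN n A θ W Vstar < expRiskN n A θ W V) := by
  classical
  set μ := Measure.pi fun j => expMeas (θ j) with hμ
  set B : Set (Fin n → ℝ) := {x | ∀ j, A < x j} with hBdef
  have hB : MeasurableSet B := by
    have hBi : B = ⋂ j, (fun x : Fin n → ℝ => x j) ⁻¹' Set.Ioi A := by
      ext x; simp [hBdef]
    rw [hBi]
    exact MeasurableSet.iInter fun j => (measurable_pi_apply j) measurableSet_Ioi
  have hS0 : ∀ x ∈ B, expS n A θ x = 0 := by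
    intro x hx
    refine Finset.sum_eq_zero fun j _ => ?_
    rw [if_neg (not_le.mpr (hx j))]
  have hVB : ∀ x ∈ B, V x = n * A := by
    intro x hx
    rw [hV]
    have hm : ∀ j : Fin n, min (x j) A = A := fun j => min_eq_right (le_of_lt (hx j))
    simp [hm, Finset.sum_const, nsmul_eq_mul]
  set f : (Fin n → ℝ) → ENNReal :=
    fun x => ENNReal.ofReal (W (V x - expS n A θ x)) with hf
  set g : (Fin n → ℝ) → ENNReal :=
    fun x => ENNReal.ofReal (W (Vstar x - expS n A θ x)) with hg
  have hpt : ∀ x, g x ≤ f x := by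
    intro x
    by_cases hx : ∀ j, A < x j
    · have h1 : Vstar x = 0 := by rw [hVstar, if_pos hx]
      have h2 : expS n A θ x = 0 := hS0 x hx
      simp [hg, h1, h2, hW0]
    · rw [hg, hf]
      simp only [hVstar x, if_neg hx]
      exact le_rfl
  have hle : expRiskN n A θ W Vstar ≤ expRiskN n A θ W V := lintegral_mono hpt
  refine ⟨hle, fun hfin => ?_⟩
  -- split the integrals over B and Bᶜ
  have hsplitV : expRiskN n A θ W V = (∫⁻ x in B, f x ∂μ) + ∫⁻ x in Bᶜ, f x ∂μ :=
    (lintegral_add_compl f hB).symm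
  have hsplitVs : expRiskN n A θ W Vstar = (∫⁻ x in B, g x ∂μ) + ∫⁻ x in Bᶜ, g x ∂μ :=
    (lintegral_add_compl g hB).symm
  have hgB : (∫⁻ x in B, g x ∂μ) = 0 := by
    rw [setLIntegral_congr_fun hB (fun x hx => ?_), lintegral_zero]
    have h1 : Vstar x = 0 := by
      rw [hVstar]; exact if_pos (hx : ∀ j, A < x j)
    have h2 : expS n A θ x = 0 := hS0 x hx
    simp [hg, h1, h2, hW0]
  have hgc : (∫⁻ x in Bᶜ, g x ∂μ) = ∫⁻ x in Bᶜ, f x ∂μ := by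
    refine setLIntegral_congr_fun hB.compl (fun x hx => ?_)
    have : Vstar x = V x := by
      rw [hVstar]; exact if_neg (hx : ¬ ∀ j, A < x j)
    rw [hg, hf]; simp only [this]
  have hfB : (∫⁻ x in B, f x ∂μ) = ENNReal.ofReal (W (n * A)) * μ B := by
    rw [setLIntegral_congr_fun hB (fun x hx => ?_), setLIntegral_const]
    rw [hf]
    simp only [hVB x hx, hS0 x hx, sub_zero]
  have hμB : μ B ≠ 0 := by
    have hBpi : B = Set.univ.pi fun _ : Fin n => Set.Ioi A := by
      ext x; simp [hBdef, Set.mem_pi]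
    rw [hBpi, hμ, Measure.pi_pi]
    exact Finset.prod_ne_zero_iff.mpr fun j _ => expMeas_Ioi_ne_zero (hθ j) hA
  have hWn : 0 < W (n * A) := hWpos _ (mul_pos (Nat.cast_pos.mpr hn) hA)
  have hcne : ENNReal.ofReal (W (n * A)) * μ B ≠ 0 :=
    mul_ne_zero (ENNReal.ofReal_pos.mpr hWn).ne' hμB
  have hVsne : expRiskN n A θ W Vstar ≠ ⊤ := (hle.trans_lt hfin).ne
  calc expRiskN n A θ W Vstar
      < expRiskN n A θ W Vstar + ENNReal.ofReal (W (n * A)) * μ B :=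
        ENNReal.lt_add_right hVsne hcne
    _ = (∫⁻ x in Bᶜ, f x ∂μ) + ENNReal.ofReal (W (n * A)) * μ B := by
        rw [hsplitVs, hgB, hgc, zero_add]
    _ = expRiskN n A θ W V := by rw [hsplitV, hfB, add_comm]
end

section
/- Let A > 0 be a real number, U(x) = 1 if x ≤ A and U(x) = 0 if x > A, and let X be uniformly distributed on (0, θ), θ > 0. Let V(x) = 2x for x ≤ A and V(x) = A for x > A, and define V*(x) = 2x for x ≤ A and V*(x) = 0 for x > A. Let W : ℝ → [0, ∞) be measurable with W(0) = 0 and W(t) > 0 for t > 0. Then for every θ > 0, E_θ[W(V*(X) − U(X)θ)] ≤ E_θ[W(V(X) − U(X)θ)], and for every θ > A with E_θ[W(V(X) − U(X)θ)] < ∞ the inequality is strict; hence V(X) is an inadmissible estimator of U(X)θ under the loss W(a − S). -/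
open MeasureTheory

/-- Risk of the estimator `δ` of `U(X)θ` under the loss `W(a - S)`, where
`U(x) = 1{x ≤ A}` and `X` is uniform on `(0, θ)` with density `1/θ`. -/
noncomputable def unifRisk (A θ : ℝ) (W : ℝ → ℝ) (δ : ℝ → ℝ) : ENNReal :=
  ∫⁻ x in Set.Ioo (0 : ℝ) θ,
    ENNReal.ofReal (W (δ x - (if x ≤ A then (1 : ℝ) else 0) * θ) * θ⁻¹)

/-- Theorem 2.1 (uniform scale case, `n = 1`): Robbins' estimator
(`V(x) = 2x` for `x ≤ A`, `V(x) = A` for `x > A`) of `U(X)θ` is inadmissible: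
the estimator `V*` with `V*(x) = 2x` for `x ≤ A` and `V*(x) = 0` for `x > A`
has risk no larger for every `θ > 0`, and strictly smaller for every `θ > A`
at which the risk of `V` is finite. -/
theorem uniform_V_inadmissible (A : ℝ) (hA : 0 < A)
    (W : ℝ → ℝ) (hWmeas : Measurable W) (hWnonneg : ∀ t, 0 ≤ W t)
    (hW0 : W 0 = 0) (hWpos : ∀ t : ℝ, 0 < t → 0 < W t)
    (V Vstar : ℝ → ℝ)
    (hV : ∀ x, V x = if x ≤ A then 2 * x else A)
    (hVstar : ∀ x, Vstar x = if x ≤ A then 2 * x else 0) :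
    (∀ θ : ℝ, 0 < θ → unifRisk A θ W Vstar ≤ unifRisk A θ W V) ∧
      (∀ θ : ℝ, A < θ → unifRisk A θ W V < ⊤ →
        unifRisk A θ W Vstar < unifRisk A θ W V) := by
  constructor
  · intro θ hθ
    unfold unifRisk
    apply lintegral_mono
    intro x
    by_cases hx : x ≤ A
    · simp [hV, hVstar, hx]
    · simp [hV, hVstar, hx, hW0]
  · intro θ hθ hfin
    have hθ0 : (0:ℝ) < θ := hA.trans hθ
    have hsplit : Set.Ioo (0:ℝ) θ = Set.Ioc 0 A ∪ Set.Ioo A θ :=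
      (Set.Ioc_union_Ioo_eq_Ioo hA.le hθ).symm
    unfold unifRisk at *
    rw [hsplit] at hfin ⊢
    have hdisj : Disjoint (Set.Ioc (0:ℝ) A) (Set.Ioo A θ) :=
      Set.disjoint_left.mpr (fun x hx hx2 => absurd hx.2 (not_le.mpr hx2.1))
    have hmeas : MeasurableSet (Set.Ioo A θ) := measurableSet_Ioo
    rw [lintegral_union hmeas hdisj] at hfin ⊢
    rw [lintegral_union hmeas hdisj]
    have hVstar2 : ∫⁻ x in Set.Ioo A θ,
        ENNReal.ofReal (W (Vstar x - (if x ≤ A then (1:ℝ) else 0) * θ) * θ⁻¹) = 0 := by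
      rw [setLIntegral_congr_fun (g := fun _ => (0:ENNReal)) hmeas
        ((fun x hx => by
          have : ¬ x ≤ A := not_le.mpr hx.1
          simp [hVstar, this, hW0]))]
      simp
    have hV2 : ∫⁻ x in Set.Ioo A θ,
        ENNReal.ofReal (W (V x - (if x ≤ A then (1:ℝ) else 0) * θ) * θ⁻¹)
        = ENNReal.ofReal (W A * θ⁻¹) * volume (Set.Ioo A θ) := by
      rw [setLIntegral_congr_fun (g := fun _ => ENNReal.ofReal (W A * θ⁻¹)) hmeas
        ((fun x hx => by
          have : ¬ x ≤ A := not_le.mpr hx.1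
          simp [hV, this]))]
      simp [lintegral_const, Measure.restrict_apply, MeasurableSet.univ]
    have hVstar1 :
        (∫⁻ x in Set.Ioc (0:ℝ) A,
          ENNReal.ofReal (W (Vstar x - (if x ≤ A then (1:ℝ) else 0) * θ) * θ⁻¹))
        = ∫⁻ x in Set.Ioc (0:ℝ) A,
          ENNReal.ofReal (W (V x - (if x ≤ A then (1:ℝ) else 0) * θ) * θ⁻¹) := by
      apply setLIntegral_congr_fun measurableSet_Ioc
      exact (fun x hx => by simp [hV, hVstar, hx.2])
    rw [hVstar2, hVstar1, hV2, add_zero]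
    have hI1fin : (∫⁻ x in Set.Ioc (0:ℝ) A,
        ENNReal.ofReal (W (V x - (if x ≤ A then (1:ℝ) else 0) * θ) * θ⁻¹)) ≠ ⊤ :=
      (lt_of_le_of_lt (le_add_right le_rfl) hfin).ne
    have hc : 0 < ENNReal.ofReal (W A * θ⁻¹) * volume (Set.Ioo A θ) := by
      apply ENNReal.mul_pos
      · simp only [ne_eq, ENNReal.ofReal_eq_zero, not_le]
        exact mul_pos (hWpos A hA) (inv_pos.mpr hθ0)
      · rw [Real.volume_Ioo]
        simp only [ne_eq, ENNReal.ofReal_eq_zero, not_le]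
        linarith
    calc _ = (∫⁻ x in Set.Ioc (0:ℝ) A,
          ENNReal.ofReal (W (V x - (if x ≤ A then (1:ℝ) else 0) * θ) * θ⁻¹)) + 0 := by
          rw [add_zero]
      _ < _ := ENNReal.add_lt_add_left hI1fin hc
end

section
/- Let A ≥ 0 be a real number, set m = ⌊A⌋ + 1, and let X_1, …, X_n be i.i.d. Poisson random variables each with mean m. Let U(x) = 1 if x ≤ A and 0 if x > A, S = ∑_{j=1}^n U(X_j)·m, V(X) = ∑_{j=1}^n X_j·1{X_j ≤ m}, and V*(X) = 0 if X_j ≥ m for all j and V*(X) = V(X) otherwise. Then under squared error loss the improvement in risk equals E[(V(X) − S)²] − E[(V*(X) − S)²] = ∑_{i=1}^n (i·m)² · C(n, i) · (e^{-m} m^m / m!)^i · (1 − ∑_{y=0}^{m} e^{-m} m^y / y!)^{n−i}. -/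
set_option maxHeartbeats 1000000 in
lemma hasSum_pi_prod : ∀ {n : ℕ} (g : Fin n → ℕ → ℝ) (a : Fin n → ℝ),
    (∀ j y, 0 ≤ g j y) → (∀ j, HasSum (g j) (a j)) →
    HasSum (fun x : Fin n → ℕ => ∏ j, g j (x j)) (∏ j, a j) := by
  intro n
  induction n with
  | zero =>
    intro g a _ _
    simp only [Finset.univ_eq_empty, Finset.prod_empty]
    have : HasSum (fun _ : Fin 0 → ℕ => (1 : ℝ)) ((fun _ : Fin 0 → ℕ => (1:ℝ)) default) :=
      hasSum_single default (fun b hb => absurd (Subsingleton.elim b default) hb)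
    exact this
  | succ n ih =>
    intro g a hpos hg
    have ihs : HasSum (fun c : Fin n → ℕ => ∏ j, g j.succ (c j)) (∏ j : Fin n, a j.succ) :=
      ih (fun j => g j.succ) (fun j => a j.succ) (fun j y => hpos _ y) (fun j => hg _)
    have hnn : ∀ c : Fin n → ℕ, 0 ≤ ∏ j, g j.succ (c j) :=
      fun c => Finset.prod_nonneg fun j _ => hpos _ _
    have hsummul : Summable fun x : ℕ × (Fin n → ℕ) => g 0 x.1 * ∏ j, g j.succ (x.2 j) := by
      rw [summable_prod_of_nonneg (fun p => mul_nonneg (hpos 0 p.1) (hnn p.2))]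
      constructor
      · intro b
        dsimp only
        exact ihs.summable.mul_left _
      · have : (fun b : ℕ => ∑' c : Fin n → ℕ, g 0 b * ∏ j, g j.succ (c j)) =
            fun b => g 0 b * (∏ j : Fin n, a j.succ) := by
          funext b; rw [tsum_mul_left, ihs.tsum_eq]
        dsimp only
        rw [this]
        exact (hg 0).summable.mul_right _
    have hmul := HasSum.mul (hg 0) ihs hsummul
    have key := (Equiv.hasSum_iff (Fin.consEquiv (fun _ : Fin (n+1) => ℕ)).symm).mpr hmul
    rw [show (∏ j : Fin (n+1), a j) = a 0 * ∏ j : Fin n, a j.succ from Fin.prod_univ_succ a]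
    refine key.congr_fun fun x => ?_
    rw [Fin.prod_univ_succ]
    rfl

lemma poissonPmf_nonneg {θ : ℝ} (hθ : 0 ≤ θ) (y : ℕ) : 0 ≤ poissonPmf θ y := by
  unfold poissonPmf; positivity

lemma poissonPmf_hasSum (θ : ℝ) : HasSum (poissonPmf θ) 1 := by
  have h : HasSum (fun y : ℕ => θ ^ y / y.factorial) (Real.exp θ) := by
    rw [Real.exp_eq_exp_ℝ]
    exact NormedSpace.expSeries_div_hasSum_exp θ
  have h2 := h.mul_left (Real.exp (-θ))
  have h3 : Real.exp (-θ) * Real.exp θ = 1 := by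
    rw [← Real.exp_add]; simp
  rw [h3] at h2
  refine h2.congr_fun fun y => ?_
  unfold poissonPmf; ring

/-- Remark 2.2: let `m = ⌊A⌋ + 1` and let `X_1, …, X_n` be i.i.d. Poisson with
mean `m`.  With `S = ∑_j U(X_j)·m` (where `U(x) = 1{x ≤ A}`),
`V(X) = ∑_j X_j·1{X_j ≤ m}`, and `V*` the improved estimator vanishing on
`{∀ j, X_j ≥ m}` and agreeing with `V` elsewhere, the improvement in risk
under squared error loss equals
`∑_{i=1}^n (i·m)² C(n,i) (e^{-m} m^m/m!)^i (1 - ∑_{y=0}^m e^{-m} m^y/y!)^{n-i}`. -/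
theorem poisson_risk_improvement (A : ℝ) (hA : 0 ≤ A) (n : ℕ)
    (m : ℕ) (hm : m = Nat.floor A + 1)
    (S V Vstar : (Fin n → ℕ) → ℝ)
    (hS : ∀ x, S x = ∑ j, (if ((x j : ℝ)) ≤ A then (m : ℝ) else 0))
    (hV : ∀ x, V x = ∑ j, (if x j ≤ m then ((x j : ℝ)) else 0))
    (hVstar : ∀ x, Vstar x = if ∀ j, m ≤ x j then 0 else V x) :
    (∑' x : Fin n → ℕ, (V x - S x) ^ 2 * ∏ j, poissonPmf (m : ℝ) (x j)) -
        (∑' x : Fin n → ℕ, (Vstar x - S x) ^ 2 * ∏ j, poissonPmf (m : ℝ) (x j)) =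
      ∑ i ∈ Finset.Icc 1 n,
        ((i * m : ℕ) : ℝ) ^ 2 * (n.choose i : ℝ) *
          (Real.exp (-(m : ℝ)) * (m : ℝ) ^ m / (Nat.factorial m : ℝ)) ^ i *
          (1 - ∑ y ∈ Finset.range (m + 1),
            Real.exp (-(m : ℝ)) * (m : ℝ) ^ y / (Nat.factorial y : ℝ)) ^ (n - i) := by
  classical
  set θ : ℝ := (m : ℝ) with hθdef
  have hθ0 : (0:ℝ) ≤ θ := by positivity
  have hAx : ∀ x : ℕ, ((x:ℝ) ≤ A ↔ x < m) := by
    intro x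
    rw [← Nat.le_floor_iff hA, hm]
    omega
  set p : ℝ := poissonPmf θ m with hpdef
  set q : ℝ := 1 - ∑ y ∈ Finset.range (m + 1), poissonPmf θ y with hqdef
  have hp0 : 0 ≤ p := poissonPmf_nonneg hθ0 m
  -- HasSum for the tail indicator
  have hqsum : HasSum (fun y : ℕ => if m + 1 ≤ y then poissonPmf θ y else 0) q := by
    have hfin := hasSum_sum_of_ne_finset_zero
      (f := fun y : ℕ => if y < m + 1 then poissonPmf θ y else 0)
      (s := Finset.range (m + 1)) (L := SummationFilter.unconditional ℕ)
      (by intro b hb; exact if_neg (by simpa using hb))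
    rw [Finset.sum_congr rfl (fun y hy => if_pos (Finset.mem_range.mp hy))] at hfin
    refine ((poissonPmf_hasSum θ).sub hfin).congr_fun fun y => ?_
    rcases lt_or_ge y (m + 1) with h | h
    · rw [if_neg (by omega), if_pos h, sub_self]
    · rw [if_pos h, if_neg (by omega), sub_zero]
  have hpsum : HasSum (fun y : ℕ => if y = m then p else 0) p := hasSum_ite_eq m p
  have hq0 : 0 ≤ q := by
    refine hqsum.nonneg fun y => ?_
    split_ifs
    exacts [poissonPmf_nonneg hθ0 y, le_rfl]
  -- the per-coordinate weights
  set w : Finset (Fin n) → Fin n → ℕ → ℝ := fun T j y =>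
    if j ∈ T then (if y = m then p else 0) else (if m + 1 ≤ y then poissonPmf θ y else 0)
    with hwdef
  have hw_nonneg : ∀ T j y, 0 ≤ w T j y := by
    intro T j y
    simp only [hwdef]
    split_ifs <;> first | exact hp0 | exact poissonPmf_nonneg hθ0 y | rfl
  have hW : ∀ T : Finset (Fin n),
      HasSum (fun x : Fin n → ℕ => ∏ j, w T j (x j)) (p ^ T.card * q ^ (n - T.card)) := by
    intro T
    have h1 : HasSum (fun x : Fin n → ℕ => ∏ j, w T j (x j))
        (∏ j, if j ∈ T then p else q) := by
      refine hasSum_pi_prod _ _ (hw_nonneg T) fun j => ?_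
      by_cases hj : j ∈ T
      · simp only [hwdef, hj, if_true]; exact hpsum
      · simp only [hwdef, hj, if_false]; exact hqsum
    have h2 : (∏ j, if j ∈ T then p else q) = p ^ T.card * q ^ (n - T.card) := by
      have e1 : Finset.univ.filter (fun j => j ∈ T) = T := by ext j; simp
      have e2 : (Finset.univ.filter (fun j => ¬ j ∈ T)).card = n - T.card := by
        have e3 : Finset.univ.filter (fun j => ¬ j ∈ T) = Tᶜ := by ext j; simp
        rw [e3, Finset.card_compl]
        simp
      rw [Finset.prod_ite, Finset.prod_const, Finset.prod_const, e1, e2]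
    rwa [h2] at h1
  -- total mass
  have hP : HasSum (fun x : Fin n → ℕ => ∏ j, poissonPmf θ (x j)) 1 := by
    have := hasSum_pi_prod (fun _ : Fin n => poissonPmf θ) (fun _ => 1)
      (fun _ y => poissonPmf_nonneg hθ0 y) (fun _ => poissonPmf_hasSum θ)
    simpa using this
  have hP_nonneg : ∀ x : Fin n → ℕ, 0 ≤ ∏ j, poissonPmf θ (x j) :=
    fun x => Finset.prod_nonneg fun j _ => poissonPmf_nonneg hθ0 _
  -- bounds
  have hVb : ∀ x, 0 ≤ V x ∧ V x ≤ (n : ℝ) * m := by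
    intro x
    rw [hV x]
    constructor
    · exact Finset.sum_nonneg fun j _ => by split_ifs <;> positivity
    · calc (∑ j, if x j ≤ m then ((x j : ℝ)) else 0) ≤ ∑ _j : Fin n, (m : ℝ) := by
            refine Finset.sum_le_sum fun j _ => ?_
            split_ifs with h
            · exact_mod_cast h
            · positivity
        _ = (n : ℝ) * m := by simp [mul_comm]
  have hSb : ∀ x, 0 ≤ S x ∧ S x ≤ (n : ℝ) * m := by
    intro x
    rw [hS x]
    constructor
    · exact Finset.sum_nonneg fun j _ => by split_ifs <;> positivity
    · calc (∑ j, if ((x j : ℝ)) ≤ A then (m:ℝ) else 0) ≤ ∑ _j : Fin n, (m : ℝ) := by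
            refine Finset.sum_le_sum fun j _ => ?_
            split_ifs with h
            · exact le_refl _
            · positivity
        _ = (n : ℝ) * m := by simp [mul_comm]
  have hVsb : ∀ x, 0 ≤ Vstar x ∧ Vstar x ≤ (n : ℝ) * m := by
    intro x
    rw [hVstar x]
    split_ifs
    · exact ⟨le_refl 0, by positivity⟩
    · exact hVb x
  have hsum1 : Summable fun x : Fin n → ℕ => (V x - S x) ^ 2 * ∏ j, poissonPmf θ (x j) := by
    refine Summable.of_nonneg_of_le (fun x => mul_nonneg (sq_nonneg _) (hP_nonneg x))
      (fun x => ?_) (hP.summable.mul_left (((n:ℝ)*m)^2))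
    refine mul_le_mul_of_nonneg_right ?_ (hP_nonneg x)
    have h1 := hVb x; have h2 := hSb x
    refine sq_le_sq' (by linarith) (by linarith)
  have hsum2 : Summable fun x : Fin n → ℕ => (Vstar x - S x) ^ 2 * ∏ j, poissonPmf θ (x j) := by
    refine Summable.of_nonneg_of_le (fun x => mul_nonneg (sq_nonneg _) (hP_nonneg x))
      (fun x => ?_) (hP.summable.mul_left (((n:ℝ)*m)^2))
    refine mul_le_mul_of_nonneg_right ?_ (hP_nonneg x)
    have h1 := hVsb x; have h2 := hSb x
    refine sq_le_sq' (by linarith) (by linarith)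
  -- pointwise difference
  have hdiff : ∀ x : Fin n → ℕ,
      (V x - S x) ^ 2 * (∏ j, poissonPmf θ (x j)) -
        (Vstar x - S x) ^ 2 * (∏ j, poissonPmf θ (x j)) =
      (if ∀ j, m ≤ x j then (V x) ^ 2 else 0) * ∏ j, poissonPmf θ (x j) := by
    intro x
    by_cases hx : ∀ j, m ≤ x j
    · have hSx : S x = 0 := by
        rw [hS x]
        refine Finset.sum_eq_zero fun j _ => ?_
        rw [if_neg]
        rw [hAx (x j)]
        exact not_lt.mpr (hx j)
      have hVsx : Vstar x = 0 := by rw [hVstar x, if_pos hx]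
      rw [if_pos hx, hSx, hVsx]
      ring
    · have hVsx : Vstar x = V x := by rw [hVstar x, if_neg hx]
      rw [if_neg hx, hVsx]
      ring
  -- pointwise expansion over subsets
  have hpoint : ∀ x : Fin n → ℕ,
      (if ∀ j, m ≤ x j then (V x) ^ 2 else 0) * ∏ j, poissonPmf θ (x j) =
      ∑ T ∈ (Finset.univ : Finset (Fin n)).powerset,
        ((T.card : ℝ) * m) ^ 2 * ∏ j, w T j (x j) := by
    intro x
    by_cases hx : ∀ j, m ≤ x j
    · set T0 : Finset (Fin n) := Finset.univ.filter (fun j => x j = m) with hT0def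
      have hVx : V x = (T0.card : ℝ) * m := by
        rw [hV x]
        have : ∀ j : Fin n, (if x j ≤ m then ((x j : ℝ)) else 0) =
            (if x j = m then (m : ℝ) else 0) := by
          intro j
          by_cases hj : x j = m
          · rw [if_pos hj, if_pos (le_of_eq hj), hj]
          · rw [if_neg hj, if_neg (fun hle => hj (le_antisymm hle (hx j)))]
        rw [Finset.sum_congr rfl fun j _ => this j, ← Finset.sum_filter, ← hT0def,
          Finset.sum_const, nsmul_eq_mul]
      rw [if_pos hx, hVx]
      rw [Finset.sum_eq_single_of_mem T0 (Finset.mem_powerset.mpr (Finset.subset_univ _))]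
      · congr 1
        refine Finset.prod_congr rfl fun j _ => ?_
        by_cases hj : x j = m
        · have : j ∈ T0 := by simp [hT0def, hj]
          simp [hwdef, this, hj, hpdef]
        · have : j ∉ T0 := by simp [hT0def, hj]
          have hle : m + 1 ≤ x j := by
            have := hx j; omega
          simp only [hwdef, this, if_false, hle, if_true]
      · intro T hT hne
        have : ∃ j, ¬ (j ∈ T ↔ j ∈ T0) := by
          by_contra hc
          push_neg at hc
          exact hne (Finset.ext fun a => hc a)
        obtain ⟨j, hj⟩ := this
        have : w T j (x j) = 0 := by
          by_cases hjT : j ∈ T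
          · have hjT0 : j ∉ T0 := fun h => hj ⟨fun _ => h, fun _ => hjT⟩
            have hxj : x j ≠ m := by simpa [hT0def] using hjT0
            simp [hwdef, hjT, hxj]
          · have hjT0 : j ∈ T0 := by
              by_contra h
              exact hj ⟨fun h' => absurd h' hjT, fun h' => absurd h' h⟩
            have hxj : x j = m := by simpa [hT0def] using hjT0
            simp [hwdef, hjT, hxj]
        rw [Finset.prod_eq_zero (Finset.mem_univ j) this, mul_zero]
    · rw [if_neg hx, zero_mul]
      push_neg at hx
      obtain ⟨j0, hj0⟩ := hx
      refine (Finset.sum_eq_zero fun T _ => ?_).symm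
      have : w T j0 (x j0) = 0 := by
        by_cases hjT : j0 ∈ T
        · have : x j0 ≠ m := by omega
          simp [hwdef, hjT, this]
        · have : ¬ (m + 1 ≤ x j0) := by omega
          simp [hwdef, hjT, this]; intro h; omega
      rw [Finset.prod_eq_zero (Finset.mem_univ j0) this, mul_zero]
  -- assemble
  rw [← (Summable.tsum_sub hsum1 hsum2), tsum_congr hdiff, tsum_congr hpoint]
  rw [Summable.tsum_finsetSum fun T _ => ((hW T).summable.mul_left _)]
  have hterm : ∀ T : Finset (Fin n),
      (∑' x : Fin n → ℕ, ((T.card : ℝ) * m) ^ 2 * ∏ j, w T j (x j)) =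
      ((T.card : ℝ) * m) ^ 2 * (p ^ T.card * q ^ (n - T.card)) := by
    intro T
    rw [tsum_mul_left, (hW T).tsum_eq]
  rw [Finset.sum_congr rfl fun T _ => hterm T]
  rw [Finset.sum_powerset]
  have hcard : (Finset.univ : Finset (Fin n)).card = n := by simp
  rw [hcard]
  have hinner : ∀ i ∈ Finset.range (n + 1),
      (∑ T ∈ Finset.powersetCard i (Finset.univ : Finset (Fin n)),
        ((T.card : ℝ) * m) ^ 2 * (p ^ T.card * q ^ (n - T.card))) =
      (n.choose i : ℝ) * (((i : ℝ) * m) ^ 2 * (p ^ i * q ^ (n - i))) := by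
    intro i _
    rw [Finset.sum_congr rfl fun T hT => ?_]
    · rw [Finset.sum_const, Finset.card_powersetCard, hcard, nsmul_eq_mul]
    · have : T.card = i := (Finset.mem_powersetCard.mp hT).2
      rw [this]
  rw [Finset.sum_congr rfl hinner]
  have hsub : Finset.Icc 1 n ⊆ Finset.range (n + 1) := by
    intro i hi
    rw [Finset.mem_range]
    have := (Finset.mem_Icc.mp hi).2
    omega
  have hzero : ∀ i ∈ Finset.range (n + 1), i ∉ Finset.Icc 1 n →
      (n.choose i : ℝ) * (((i : ℝ) * m) ^ 2 * (p ^ i * q ^ (n - i))) = 0 := by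
    intro i h1 h2
    have : i = 0 := by
      rw [Finset.mem_range] at h1
      rw [Finset.mem_Icc] at h2
      omega
    subst this
    simp
  rw [← Finset.sum_subset hsub hzero]
  refine Finset.sum_congr rfl fun i hi => ?_
  push_cast
  rw [hpdef, hqdef]
  unfold poissonPmf
  ring
end

section
/- Let A ≥ 0 be a real number, U(x) = 1 if x ≤ A and U(x) = 0 if x > A, and let X_1, …, X_n, Y_1, …, Y_n be mutually independent with X_j and Y_j both Poisson with mean θ_j > 0. Let S* = ∑_{j=1}^n Y_j·U(X_j), V(X) = ∑_{j=1}^n X_j·1{X_j ≤ ⌊A⌋ + 1}, and V*(X) = 0 if X_j ≥ ⌊A⌋ + 1 for all j and V*(X) = V(X) otherwise. Let W : ℝ → [0, ∞) be measurable with W(0) = 0 and W(t) > 0 for t > 0. Then for every θ ∈ (0, ∞)^n, E_θ[W(V*(X) − S*)] ≤ E_θ[W(V(X) − S*)], with strict inequality whenever E_θ[W(V(X) − S*)] < ∞; hence V(X) is an inadmissible predictor of S* under the loss W(a − S*). -/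
/-- The prediction target `S* = ∑_j Y_j·U(X_j)` with `U(x) = 1{x ≤ A}`,
written as a function of the pair `(x, y)`. -/
noncomputable def predS (n : ℕ) (A : ℝ) (p : (Fin n → ℕ) × (Fin n → ℕ)) : ℝ :=
  ∑ j, ((p.2 j : ℝ)) * (if ((p.1 j : ℝ)) ≤ A then (1 : ℝ) else 0)

/-- Risk of the predictor `δ(X)` of `S* = ∑_j Y_j U(X_j)` under the loss
`W(a - S*)`, where `X_1, …, X_n, Y_1, …, Y_n` are mutually independent and
`X_j, Y_j` are Poisson with mean `θ_j`. -/
noncomputable def predRisk (n : ℕ) (A : ℝ) (θ : Fin n → ℝ) (W : ℝ → ℝ)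
    (δ : (Fin n → ℕ) → ℝ) : ENNReal :=
  ∑' p : (Fin n → ℕ) × (Fin n → ℕ),
    ENNReal.ofReal (W (δ p.1 - predS n A p) *
      ((∏ j, poissonPmf (θ j) (p.1 j)) * ∏ j, poissonPmf (θ j) (p.2 j)))

/-- Remark 2.3: Robbins' estimator `V(X) = ∑_j X_j·1{X_j ≤ ⌊A⌋+1}` is an
inadmissible predictor of `S* = ∑_j Y_j U(X_j)`: the predictor `V*` vanishing
on `{∀ j, X_j ≥ ⌊A⌋+1}` and agreeing with `V` elsewhere is at least as good
for every `θ ∈ (0,∞)^n`, and strictly better whenever the risk of `V` is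
finite. -/
theorem poisson_V_inadmissible_prediction (n : ℕ) (hn : 0 < n) (A : ℝ) (hA : 0 ≤ A)
    (W : ℝ → ℝ) (hWmeas : Measurable W) (hWnonneg : ∀ t, 0 ≤ W t)
    (hW0 : W 0 = 0) (hWpos : ∀ t : ℝ, 0 < t → 0 < W t)
    (V Vstar : (Fin n → ℕ) → ℝ)
    (hV : ∀ x, V x = ∑ j, (if x j ≤ Nat.floor A + 1 then ((x j : ℝ)) else 0))
    (hVstar : ∀ x, Vstar x = if ∀ j, Nat.floor A + 1 ≤ x j then 0 else V x)
    (θ : Fin n → ℝ) (hθ : ∀ j, 0 < θ j) :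
    predRisk n A θ W Vstar ≤ predRisk n A θ W V ∧
      (predRisk n A θ W V < ⊤ →
        predRisk n A θ W Vstar < predRisk n A θ W V) := by
  classical
  set m : ℕ := Nat.floor A + 1 with hm
  have hAm : ∀ x : ℕ, m ≤ x → ¬((x:ℝ) ≤ A) := by
    intro x hx hle
    have h1 : A < (m : ℝ) := by
      have := Nat.lt_floor_add_one A
      push_cast [hm]
      linarith
    have h2 : (m:ℝ) ≤ x := by exact_mod_cast hx
    linarith
  set F : ((Fin n → ℕ) → ℝ) → ((Fin n → ℕ) × (Fin n → ℕ)) → ENNReal :=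
    fun δ p => ENNReal.ofReal (W (δ p.1 - predS n A p) *
      ((∏ j, poissonPmf (θ j) (p.1 j)) * ∏ j, poissonPmf (θ j) (p.2 j))) with hF
  have hrisk : ∀ δ, predRisk n A θ W δ = ∑' p, F δ p := fun δ => rfl
  -- predS vanishes when all p.1 j ≥ m
  have hS0 : ∀ p : (Fin n → ℕ) × (Fin n → ℕ), (∀ j, m ≤ p.1 j) → predS n A p = 0 := by
    intro p h
    unfold predS
    refine Finset.sum_eq_zero fun j _ => ?_
    rw [if_neg (hAm _ (h j)), mul_zero]
  -- F Vstar vanishes on the event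
  have hFV0 : ∀ p : (Fin n → ℕ) × (Fin n → ℕ), (∀ j, m ≤ p.1 j) → F Vstar p = 0 := by
    intro p h
    rw [hF]
    simp only
    rw [hVstar, if_pos h, hS0 p h, sub_zero, hW0, zero_mul, ENNReal.ofReal_zero]
  -- termwise inequality
  have hterm : ∀ p, F Vstar p ≤ F V p := by
    intro p
    by_cases h : ∀ j, m ≤ p.1 j
    · rw [hFV0 p h]; exact zero_le
    · rw [hF]; simp only; rw [hVstar, if_neg h]
  have hle : predRisk n A θ W Vstar ≤ predRisk n A θ W V := by
    rw [hrisk, hrisk]; exact ENNReal.tsum_le_tsum hterm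
  refine ⟨hle, fun hfin => ?_⟩
  -- special point
  set p0 : (Fin n → ℕ) × (Fin n → ℕ) := (fun _ => m, fun _ => 0) with hp0
  have hp0E : ∀ j, m ≤ p0.1 j := fun j => le_refl m
  have hS0p0 : predS n A p0 = 0 := hS0 p0 hp0E
  have hVp0 : V p0.1 = (n : ℝ) * m := by
    rw [hV]
    simp only [hp0]
    rw [Finset.sum_congr rfl (fun j _ => if_pos (le_refl m))]
    simp [Finset.sum_const, Finset.card_univ]
  have hprodpos : 0 < (∏ j, poissonPmf (θ j) (p0.1 j)) * ∏ j, poissonPmf (θ j) (p0.2 j) := by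
    have hpmf : ∀ (j : Fin n) (x : ℕ), 0 < poissonPmf (θ j) x := by
      intro j x
      unfold poissonPmf
      exact div_pos (mul_pos (Real.exp_pos _) (pow_pos (hθ j) _))
        (Nat.cast_pos.mpr (Nat.factorial_pos _))
    exact mul_pos (Finset.prod_pos fun j _ => hpmf j _) (Finset.prod_pos fun j _ => hpmf j _)
  have hcpos : 0 < F V p0 := by
    rw [hF]
    simp only
    rw [hS0p0, sub_zero, hVp0]
    refine ENNReal.ofReal_pos.mpr (mul_pos (hWpos _ ?_) hprodpos)
    have h1 : (1:ℝ) ≤ (n:ℝ) := by exact_mod_cast hn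
    have h2 : (1:ℝ) ≤ (m:ℝ) := by
      have : 1 ≤ m := Nat.succ_le_succ (Nat.zero_le _)
      exact_mod_cast this
    nlinarith
  -- riskVstar + F V p0 ≤ riskV
  have hadd : predRisk n A θ W Vstar + F V p0 ≤ predRisk n A θ W V := by
    rw [hrisk, hrisk]
    have : (∑' p, F Vstar p) + F V p0
        = ∑' p, (F Vstar p + if p = p0 then F V p0 else 0) := by
      rw [ENNReal.tsum_add, tsum_ite_eq]
    rw [this]
    refine ENNReal.tsum_le_tsum fun p => ?_
    by_cases h : p = p0
    · subst h
      rw [if_pos rfl, hFV0 p0 hp0E, zero_add]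
    · rw [if_neg h, add_zero]; exact hterm p
  have hne : predRisk n A θ W Vstar ≠ ⊤ := (lt_of_le_of_lt hle hfin).ne
  calc predRisk n A θ W Vstar
      < predRisk n A θ W Vstar + F V p0 := ENNReal.lt_add_right hne hcpos.ne'
    _ ≤ predRisk n A θ W V := hadd
end
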